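/- arXiv:1804.06209 — 5 statements merged into one kernel-verified Lean document; each statement's English description precedes it below -/
import Mathlib

section
/- For every integer i ≥ 0, the generating function g_i defined by g_0''' + a g_0' = 0 with g_0(0)=g_0'(0)=0, g_0''(0)=1, and g_i''' + a g_i' = -g_{i-1} with g_i(0)=g_i'(0)=g_i''(0)=0, satisfies |g_i(x)| ≤ |x|^(3i+2)/(3i+2)! for all x ∈ [-1,0]. -/
open scoped ContDiff

private lemma hasDerivAt_P (n : ℕ) (x : ℝ) :
    HasDerivAt (fun y : ℝ => (-y) ^ (n + 1) / (n + 1).factorial)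
      (-((-x) ^ n / n.factorial)) x := by
  have h : HasDerivAt (fun y : ℝ => (-y) ^ (n + 1)) (((n : ℝ) + 1) * (-x) ^ n * (-1)) x := by
    simpa using ((hasDerivAt_id x).fun_neg.fun_pow (n + 1))
  have h2 := h.div_const ((n + 1).factorial : ℝ)
  refine h2.congr_deriv ?_
  have h1 : (n.factorial : ℝ) ≠ 0 := by exact_mod_cast n.factorial_ne_zero
  rw [Nat.factorial_succ]
  push_cast
  field_simp

private lemma le_of_deriv_ge (F : ℝ → ℝ) (hF : Differentiable ℝ F) (n : ℕ) (hF0 : F 0 = 0)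
    (hF' : ∀ x ∈ Set.Icc (-1 : ℝ) 0, -((-x) ^ n / n.factorial) ≤ deriv F x) :
    ∀ x ∈ Set.Icc (-1 : ℝ) 0, F x ≤ (-x) ^ (n + 1) / (n + 1).factorial := by
  intro x hx
  set P : ℝ → ℝ := fun y => (-y) ^ (n + 1) / (n + 1).factorial with hP
  have hPd : Differentiable ℝ P := fun y => (hasDerivAt_P n y).differentiableAt
  have hanti : AntitoneOn (fun y => P y - F y) (Set.Icc (-1 : ℝ) 0) := by
    apply antitoneOn_of_deriv_nonpos (convex_Icc _ _)
    · exact (hPd.sub hF).continuous.continuousOn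
    · exact (hPd.sub hF).differentiableOn
    · intro y hy
      rw [interior_Icc] at hy
      have hyI : y ∈ Set.Icc (-1 : ℝ) 0 := Set.Ioo_subset_Icc_self hy
      rw [deriv_fun_sub (hPd y) (hF y),
        (hasDerivAt_P n y).deriv]
      have := hF' y hyI
      linarith
  have h0m : (0 : ℝ) ∈ Set.Icc (-1 : ℝ) 0 := by norm_num
  have hc : P 0 - F 0 ≤ P x - F x := hanti hx h0m hx.2
  have hP0 : P 0 = 0 := by simp [hP]
  rw [hP0, hF0] at hc
  linarith

private lemma abs_le_of_deriv_le (f : ℝ → ℝ) (hf : Differentiable ℝ f) (n : ℕ) (h0 : f 0 = 0)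
    (hb : ∀ x ∈ Set.Icc (-1 : ℝ) 0, |deriv f x| ≤ (-x) ^ n / n.factorial) :
    ∀ x ∈ Set.Icc (-1 : ℝ) 0, |f x| ≤ (-x) ^ (n + 1) / (n + 1).factorial := by
  intro x hx
  have h1 : f x ≤ (-x) ^ (n + 1) / (n + 1).factorial := by
    refine le_of_deriv_ge f hf n h0 (fun y hy => ?_) x hx
    have := (abs_le.mp (hb y hy)).1
    linarith
  have h2 : -f x ≤ (-x) ^ (n + 1) / (n + 1).factorial := by
    refine le_of_deriv_ge (fun y => -f y) hf.neg n (by simp [h0]) (fun y hy => ?_) x hx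
    rw [deriv.fun_neg]
    have := (abs_le.mp (hb y hy)).2
    linarith
  exact abs_le.mpr ⟨by linarith, h1⟩

private lemma energy_bound (a : ℝ) (ha : 0 ≤ a) (f : ℝ → ℝ) (hf : ContDiff ℝ (⊤ : ℕ∞) f)
    (h0 : f 0 = 0) (h1 : deriv f 0 = 0) (n : ℕ)
    (hb : ∀ x ∈ Set.Icc (-1 : ℝ) 0, |deriv^[2] f x + a * f x| ≤ (-x) ^ n / n.factorial) :
    ∀ x ∈ Set.Icc (-1 : ℝ) 0, |f x| ≤ (-x) ^ (n + 2) / (n + 2).factorial := by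
  have hd : ∀ k : ℕ, Differentiable ℝ (deriv^[k] f) := fun k =>
    (ContDiff.iterate_deriv k (hf.of_le (mod_cast le_top))).differentiable (by simp)
  have hfd : Differentiable ℝ f := hd 0
  have hfd1 : Differentiable ℝ (deriv f) := hd 1
  have H1 : ∀ x, HasDerivAt f (deriv f x) x := fun x => (hfd x).hasDerivAt
  have H2 : ∀ x, HasDerivAt (deriv f) (deriv^[2] f x) x := fun x => by
    have := (hfd1 x).hasDerivAt
    rwa [show deriv^[2] f = deriv (deriv f) from rfl]
  set E : ℝ → ℝ := fun x => a * f x ^ 2 + (deriv f x) ^ 2 with hE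
  have hEderiv : ∀ x, HasDerivAt E (2 * deriv f x * (deriv^[2] f x + a * f x)) x := by
    intro x
    have hA : HasDerivAt (fun y => a * f y ^ 2) (a * (2 * f x ^ 1 * deriv f x)) x :=
      ((H1 x).pow 2).const_mul a
    have hB : HasDerivAt (fun y => (deriv f y) ^ 2) (2 * deriv f x ^ 1 * deriv^[2] f x) x :=
      (H2 x).pow 2
    have hAB := hA.add hB
    refine hAB.congr_deriv ?_
    ring
  have hEnonneg : ∀ x, 0 ≤ E x := fun x => by positivity
  have key : ∀ x ∈ Set.Icc (-1 : ℝ) 0, |deriv f x| ≤ (-x) ^ (n + 1) / (n + 1).factorial := by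
    intro x hx
    refine le_of_forall_pos_le_add (fun ε hε => ?_)
    set sE : ℝ → ℝ := fun y => Real.sqrt (E y + ε ^ 2) with hsE
    have hpos : ∀ y, 0 < E y + ε ^ 2 := fun y => by
      have := hEnonneg y; positivity
    have hsEpos : ∀ y, 0 < sE y := fun y => Real.sqrt_pos.mpr (hpos y)
    have hsEd : ∀ y, HasDerivAt sE
        ((2 * deriv f y * (deriv^[2] f y + a * f y)) / (2 * sE y)) y := fun y =>
      ((hEderiv y).add_const (ε ^ 2)).sqrt (ne_of_gt (hpos y))
    have hfle : ∀ y, |deriv f y| ≤ sE y := fun y => by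
      rw [hsE]
      have h2 : (deriv f y) ^ 2 ≤ E y + ε ^ 2 := by
        have hge : 0 ≤ a * f y ^ 2 := by positivity
        simp only [hE]; nlinarith
      calc |deriv f y| = Real.sqrt ((deriv f y) ^ 2) := (Real.sqrt_sq_eq_abs _).symm
        _ ≤ _ := Real.sqrt_le_sqrt h2
    have hG : ∀ y ∈ Set.Icc (-1 : ℝ) 0,
        |sE y - ε| ≤ (-y) ^ (n + 1) / (n + 1).factorial := by
      apply abs_le_of_deriv_le
      · exact fun y => ((hsEd y).sub_const ε).differentiableAt
      · simp [hsE, hE, h0, h1, Real.sqrt_sq hε.le]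
      · intro y hy
        have hder : deriv (fun z => sE z - ε) y
            = (2 * deriv f y * (deriv^[2] f y + a * f y)) / (2 * sE y) :=
          ((hsEd y).sub_const ε).deriv
        rw [hder, abs_div]
        rw [div_le_iff₀ (by positivity : (0:ℝ) < |2 * sE y|)]
        have habs2 : |2 * sE y| = 2 * sE y := abs_of_pos (by linarith [hsEpos y])
        calc |2 * deriv f y * (deriv^[2] f y + a * f y)|
            = 2 * |deriv f y| * |deriv^[2] f y + a * f y| := by
              rw [abs_mul, abs_mul]; norm_num
          _ ≤ 2 * sE y * ((-y) ^ n / n.factorial) := by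
              apply mul_le_mul
              · have := hfle y; linarith
              · exact hb y hy
              · exact abs_nonneg _
              · have := hsEpos y; linarith
          _ = (-y) ^ n / n.factorial * |2 * sE y| := by rw [habs2]; ring
    have hG2 := (abs_le.mp (hG x hx)).2
    have hfx := hfle x
    linarith
  exact fun x hx => abs_le_of_deriv_le f hfd (n + 1) h0 key x hx

/-- For every integer `i ≥ 0`, the generating function `g_i` defined by
`g_0''' + a g_0' = 0` with `g_0(0)=g_0'(0)=0`, `g_0''(0)=1`, and
`g_i''' + a g_i' = -g_{i-1}` with `g_i(0)=g_i'(0)=g_i''(0)=0`, satisfies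
`|g_i(x)| ≤ |x|^(3i+2)/(3i+2)!` for all `x ∈ [-1,0]`. -/
theorem stmt0 (a : ℝ) (ha : 0 ≤ a) (g : ℕ → ℝ → ℝ)
    (hsmooth : ∀ i, ContDiff ℝ (⊤ : ℕ∞) (g i))
    (hode0 : ∀ x ∈ Set.Icc (-1 : ℝ) 0, deriv^[3] (g 0) x + a * deriv (g 0) x = 0)
    (hic00 : g 0 0 = 0) (hic01 : deriv (g 0) 0 = 0) (hic02 : deriv^[2] (g 0) 0 = 1)
    (hode : ∀ i : ℕ, ∀ x ∈ Set.Icc (-1 : ℝ) 0,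
      deriv^[3] (g (i + 1)) x + a * deriv (g (i + 1)) x = - g i x)
    (hic0 : ∀ i : ℕ, g (i + 1) 0 = 0) (hic1 : ∀ i : ℕ, deriv (g (i + 1)) 0 = 0)
    (hic2 : ∀ i : ℕ, deriv^[2] (g (i + 1)) 0 = 0) :
    ∀ i : ℕ, ∀ x ∈ Set.Icc (-1 : ℝ) 0,
      |g i x| ≤ |x| ^ (3 * i + 2) / (Nat.factorial (3 * i + 2) : ℝ) := by
  have habs : ∀ x ∈ Set.Icc (-1 : ℝ) 0, |x| = -x := fun x hx => abs_of_nonpos hx.2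
  have hd : ∀ i (k : ℕ), Differentiable ℝ (deriv^[k] (g i)) := fun i k =>
    (ContDiff.iterate_deriv k ((hsmooth i).of_le (mod_cast le_top))).differentiable (by simp)
  have hHd : ∀ i x, HasDerivAt (fun y => deriv^[2] (g i) y + a * g i y)
      (deriv^[3] (g i) x + a * deriv (g i) x) x := by
    intro i x
    have h3 : HasDerivAt (deriv^[2] (g i)) (deriv^[3] (g i) x) x := by
      have := (hd i 2 x).hasDerivAt
      rwa [show deriv^[3] (g i) = deriv (deriv^[2] (g i)) from
        Function.iterate_succ_apply' deriv 2 (g i)]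
    exact h3.add (((hd i 0 x).hasDerivAt).const_mul a)
  intro i
  induction i with
  | zero =>
    set h : ℝ → ℝ := fun y => deriv^[2] (g 0) y + a * g 0 y with hh
    have hhd : Differentiable ℝ h := fun x => (hHd 0 x).differentiableAt
    have hconst : ∀ x ∈ Set.Icc (-1 : ℝ) 0, h x = 1 := by
      have hmono : MonotoneOn h (Set.Icc (-1 : ℝ) 0) := by
        apply monotoneOn_of_deriv_nonneg (convex_Icc _ _) hhd.continuous.continuousOn
          hhd.differentiableOn
        intro x hx
        rw [interior_Icc] at hx
        rw [(hHd 0 x).deriv, hode0 x (Set.Ioo_subset_Icc_self hx)]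
      have hanti : AntitoneOn h (Set.Icc (-1 : ℝ) 0) := by
        apply antitoneOn_of_deriv_nonpos (convex_Icc _ _) hhd.continuous.continuousOn
          hhd.differentiableOn
        intro x hx
        rw [interior_Icc] at hx
        rw [(hHd 0 x).deriv, hode0 x (Set.Ioo_subset_Icc_self hx)]
      intro x hx
      have h0m : (0 : ℝ) ∈ Set.Icc (-1 : ℝ) 0 := by norm_num
      have e1 := hmono hx h0m hx.2
      have e2 := hanti hx h0m hx.2
      have h00 : h 0 = 1 := by
        show deriv^[2] (g 0) 0 + a * g 0 0 = 1
        rw [hic02, hic00]; ring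
      rw [h00] at e1 e2
      linarith
    have hb : ∀ x ∈ Set.Icc (-1 : ℝ) 0, |h x| ≤ (-x) ^ 0 / (Nat.factorial 0) := by
      intro x hx
      rw [hconst x hx]
      norm_num
    have hmain := energy_bound a ha (g 0) (hsmooth 0) hic00 hic01 0 hb
    intro x hx
    rw [habs x hx]
    exact hmain x hx
  | succ i ih =>
    set h : ℝ → ℝ := fun y => deriv^[2] (g (i + 1)) y + a * g (i + 1) y with hh
    have hhd : Differentiable ℝ h := fun x => (hHd (i + 1) x).differentiableAt
    have hb : ∀ x ∈ Set.Icc (-1 : ℝ) 0,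
        |h x| ≤ (-x) ^ (3 * i + 2 + 1) / (Nat.factorial (3 * i + 2 + 1)) := by
      apply abs_le_of_deriv_le h hhd (3 * i + 2)
      · show deriv^[2] (g (i + 1)) 0 + a * g (i + 1) 0 = 0
        rw [hic2 i, hic0 i]; ring
      · intro x hx
        rw [(hHd (i + 1) x).deriv, hode i x hx, abs_neg]
        have hih := ih x hx
        rwa [habs x hx] at hih
    have hmain := energy_bound a ha (g (i + 1)) (hsmooth (i + 1)) (hic0 i) (hic1 i) (3 * i + 3) hb
    intro x hx
    rw [habs x hx]
    have heq : 3 * (i + 1) + 2 = 3 * i + 3 + 2 := by ring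
    rw [heq]
    exact hmain x hx
end

section
/- Let h : [-1,0] → ℝ be real-analytic (Gevrey of order 1) and suppose that for all n ∈ ℕ: Pⁿh(0) = 0, ∂ₓPⁿh(0) = 0, and ∂ₓ²Pⁿh(0) = 0, where P = ∂ₓ³ + a∂ₓ. Then h ≡ 0 on [-1,0]. -/
/-!
`Pⁿ`, `∂ₓPⁿ` and `∂ₓ²Pⁿ` have leading terms `∂ₓ^{3n}`, `∂ₓ^{3n+1}` and `∂ₓ^{3n+2}`, so the
hypotheses force every derivative of `h` to vanish at `0`: the identity
`∂ₓʲ(P f) = ∂ₓ^{j+3} f + a ∂ₓ^{j+1} f` lets one induct on the order of the derivative, uniformly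
over all iterates of `P`. An analytic function all of whose derivatives vanish at a point is
zero near it, hence zero on the connected set `[-1, 0]`.
-/

open Filter Topology

/-- The operator `P f = f''' + a f'`. -/
noncomputable def Pop (a : ℝ) (f : ℝ → ℝ) : ℝ → ℝ :=
  fun x => iteratedDeriv 3 f x + a * deriv f x

lemma iteratedDeriv_iteratedDeriv {𝕜 F : Type*} [NontriviallyNormedField 𝕜]
    [NormedAddCommGroup F] [NormedSpace 𝕜 F] (m n : ℕ) (f : 𝕜 → F) :
    iteratedDeriv m (iteratedDeriv n f) = iteratedDeriv (m + n) f := by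
  simp only [iteratedDeriv_eq_iterate, Function.iterate_add_apply]

lemma AnalyticAt.eventually_eq_zero_of_iteratedDeriv_eq_zero {𝕜 E : Type*}
    [NontriviallyNormedField 𝕜] [CharZero 𝕜] [NormedAddCommGroup E] [NormedSpace 𝕜 E]
    [CompleteSpace E] {f : 𝕜 → E} {x : 𝕜} (hf : AnalyticAt 𝕜 f x)
    (hderiv : ∀ n, iteratedDeriv n f x = 0) : ∀ᶠ z in 𝓝 x, f z = 0 :=
  analyticOrderAt_eq_top.mp <| ENat.eq_top_iff_forall_ge.mpr fun _ =>
    (natCast_le_analyticOrderAt_iff_iteratedDeriv_eq_zero hf).mpr fun i _ => hderiv i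

section Pop

variable {a x : ℝ} {f : ℝ → ℝ}

lemma pop_eq (a : ℝ) (f : ℝ → ℝ) : Pop a f = iteratedDeriv 3 f + a • deriv f := rfl

lemma AnalyticAt.pop (hf : AnalyticAt ℝ f x) : AnalyticAt ℝ (Pop a f) x := by
  rw [pop_eq, iteratedDeriv_eq_iterate]
  exact (hf.iterated_deriv 3).add (hf.deriv.const_smul (c := a))

lemma AnalyticAt.iterate_pop (hf : AnalyticAt ℝ f x) (n : ℕ) :
    AnalyticAt ℝ ((Pop a)^[n] f) x := by
  induction n with
  | zero => exact hf
  | succ n ih => rw [Function.iterate_succ_apply']; exact ih.pop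

lemma AnalyticAt.iteratedDeriv_pop (hf : AnalyticAt ℝ f x) (j : ℕ) :
    iteratedDeriv j (Pop a f) x = iteratedDeriv (j + 3) f x + a * iteratedDeriv (j + 1) f x := by
  have h3 : AnalyticAt ℝ (iteratedDeriv 3 f) x := by
    rw [iteratedDeriv_eq_iterate]; exact hf.iterated_deriv 3
  rw [pop_eq, iteratedDeriv_add h3.contDiffAt (hf.deriv.const_smul (c := a)).contDiffAt,
    iteratedDeriv_const_smul_field, iteratedDeriv_iteratedDeriv, ← iteratedDeriv_succ',
    smul_eq_mul]

lemma AnalyticAt.iteratedDeriv_iterate_pop_eq_zero (hf : AnalyticAt ℝ f x)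
    (h0 : ∀ n, ((Pop a)^[n] f) x = 0) (h1 : ∀ n, deriv ((Pop a)^[n] f) x = 0)
    (h2 : ∀ n, iteratedDeriv 2 ((Pop a)^[n] f) x = 0) :
    ∀ k n, iteratedDeriv k ((Pop a)^[n] f) x = 0
  | 0, n => by simpa using h0 n
  | 1, n => by simpa using h1 n
  | 2, n => h2 n
  | j + 3, n => by
    have hrec := (hf.iterate_pop (a := a) n).iteratedDeriv_pop (a := a) j
    rw [← Function.iterate_succ_apply' (Pop a),
      hf.iteratedDeriv_iterate_pop_eq_zero h0 h1 h2 j (n + 1),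
      hf.iteratedDeriv_iterate_pop_eq_zero h0 h1 h2 (j + 1) n, mul_zero, add_zero] at hrec
    exact hrec.symm

end Pop

theorem stmt13_general (a : ℝ) (h : ℝ → ℝ)
    (hanal : AnalyticOnNhd ℝ h (Set.Icc (-1 : ℝ) 0))
    (h0 : ∀ n : ℕ, ((Pop a)^[n] h) 0 = 0)
    (h1 : ∀ n : ℕ, deriv ((Pop a)^[n] h) 0 = 0)
    (h2 : ∀ n : ℕ, iteratedDeriv 2 ((Pop a)^[n] h) 0 = 0) :
    ∀ x ∈ Set.Icc (-1 : ℝ) 0, h x = 0 := by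
  have h0_mem : (0 : ℝ) ∈ Set.Icc (-1 : ℝ) 0 := by norm_num
  have hderiv (k : ℕ) : iteratedDeriv k h 0 = 0 :=
    (hanal 0 h0_mem).iteratedDeriv_iterate_pop_eq_zero h0 h1 h2 k 0
  have hnear : h =ᶠ[𝓝 0] 0 := (hanal 0 h0_mem).eventually_eq_zero_of_iteratedDeriv_eq_zero hderiv
  exact fun x hx => hanal.eqOn_zero_of_preconnected_of_eventuallyEq_zero isPreconnected_Icc h0_mem
    hnear hx

/-- if `h` is real-analytic on `[-1,0]` and `Pⁿh(0) = ∂ₓPⁿh(0) =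
∂ₓ²Pⁿh(0) = 0` for all `n`, where `P = ∂ₓ³ + a∂ₓ`, then `h ≡ 0` on `[-1,0]`. -/
theorem stmt13 (a : ℝ) (ha : 0 ≤ a) (h : ℝ → ℝ)
    (hanal : AnalyticOnNhd ℝ h (Set.Icc (-1 : ℝ) 0))
    (h0 : ∀ n : ℕ, ((Pop a)^[n] h) 0 = 0)
    (h1 : ∀ n : ℕ, deriv ((Pop a)^[n] h) 0 = 0)
    (h2 : ∀ n : ℕ, iteratedDeriv 2 ((Pop a)^[n] h) 0 = 0) :
    ∀ x ∈ Set.Icc (-1 : ℝ) 0, h x = 0 :=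
  stmt13_general a h hanal h0 h1 h2
end

section
/- Let s ∈ (0,1) and (a_n)_{n≥0} a real sequence with |a_n| ≤ C (n!)^s / Rⁿ for some C, R > 0. Then f(x) = Σ_{n≥0} a_n xⁿ/n! defines an entire function which is Gevrey of order s on every interval [-l, l], with |f^{(m)}(x)| ≤ C (Σ_{k≥0} (2^s l)^k/(R^k (k!)^{1-s})) · 2^{sm}/R^m · (m!)^s for all m ∈ ℕ and x ∈ [-l,l]. -/
/-!
Since `(n + m)! ≤ 2 ^ (n + m) n! m!`, the coefficients `a (n + m)` of the `m`-th derivative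
satisfy a bound of the same shape as `a`, with `C` replaced by `C (2 ^ s / R) ^ m (m!) ^ s` and
`R` by `R / 2 ^ s`. So it suffices to bound the function itself: on `[-l, l]` it is dominated
termwise by `C ∑ lⁿ / (Rⁿ (n!) ^ (1 - s))`, which converges because `(n!) ^ (1 - s)` outgrows
every geometric sequence. The same majorant gives termwise differentiation and an infinite
radius of convergence.
-/

open Filter Real Set Topology
open scoped Nat

theorem Nat.factorial_add_le_two_pow_mul (n m : ℕ) : (n + m)! ≤ 2 ^ (n + m) * (n ! * m !) := by
  rw [← Nat.add_choose_mul_factorial_mul_factorial n m, mul_assoc]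
  exact Nat.mul_le_mul_right _ (Nat.choose_le_two_pow _ _)

theorem summable_pow_div_factorial_rpow {p : ℝ} (hp : 0 < p) (t : ℝ) :
    Summable fun n : ℕ => t ^ n / (n ! : ℝ) ^ p := by
  refine summable_of_ratio_norm_eventually_le (r := 1 / 2) (by norm_num) ?_
  have hratio : Tendsto (fun n : ℕ => |t| / ((n : ℝ) + 1) ^ p) atTop (𝓝 0) :=
    tendsto_const_nhds.div_atTop <| (tendsto_rpow_atTop hp).comp <|
      tendsto_atTop_add_const_right _ 1 tendsto_natCast_atTop_atTop
  filter_upwards [hratio.eventually_le_const (by norm_num : (0 : ℝ) < 1 / 2)] with n hn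
  have hpos : (0 : ℝ) < (n : ℝ) + 1 := by positivity
  have hsucc :
      t ^ (n + 1) / ((n + 1)! : ℝ) ^ p = t / ((n : ℝ) + 1) ^ p * (t ^ n / (n ! : ℝ) ^ p) := by
    rw [Nat.factorial_succ, Nat.cast_mul, Nat.cast_succ, Real.mul_rpow hpos.le (by positivity)]
    ring
  rw [hsucc, norm_mul, norm_div, Real.norm_eq_abs, Real.norm_of_nonneg (by positivity)]
  exact mul_le_mul_of_nonneg_right hn (norm_nonneg _)

theorem summable_pow_div_pow_mul_factorial_rpow {p : ℝ} (hp : 0 < p) (R l : ℝ) :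
    Summable fun n : ℕ => l ^ n / (R ^ n * (n ! : ℝ) ^ p) := by
  simpa only [div_pow, div_div] using summable_pow_div_factorial_rpow hp (l / R)

def GevreyBound (s C R : ℝ) (a : ℕ → ℝ) : Prop :=
  ∀ n, |a n| ≤ C * (n ! : ℝ) ^ s / R ^ n

noncomputable def egf (a : ℕ → ℝ) (x : ℝ) : ℝ :=
  ∑' n, a n * x ^ n / (n ! : ℝ)

namespace GevreyBound

variable {s C R : ℝ} {a : ℕ → ℝ}

theorem shift (h : GevreyBound s C R a) (hs : 0 ≤ s) (hR : 0 < R) (m : ℕ) :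
    GevreyBound s (C * (2 ^ s / R) ^ m * (m ! : ℝ) ^ s) (R / 2 ^ s) fun n => a (n + m) := by
  intro n
  have hC : 0 ≤ C := by simpa using (abs_nonneg _).trans (h 0)
  have h2s : (0 : ℝ) < 2 ^ s := by positivity
  have hfac : ((n + m)! : ℝ) ^ s ≤ (2 ^ s) ^ (n + m) * ((n ! : ℝ) ^ s * (m ! : ℝ) ^ s) := by
    rw [Real.rpow_pow_comm zero_le_two, ← Real.mul_rpow (by positivity) (by positivity),
      ← Real.mul_rpow (by positivity) (by positivity)]
    exact Real.rpow_le_rpow (by positivity) (mod_cast Nat.factorial_add_le_two_pow_mul n m) hs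
  calc |a (n + m)| ≤ C * ((n + m)! : ℝ) ^ s / R ^ (n + m) := h (n + m)
    _ ≤ C * ((2 ^ s) ^ (n + m) * ((n ! : ℝ) ^ s * (m ! : ℝ) ^ s)) / R ^ (n + m) := by gcongr
    _ = _ := by
      rw [div_pow, div_pow, pow_add, pow_add]
      field_simp

theorem abs_mul_pow_div_factorial_le (h : GevreyBound s C R a) {l x : ℝ}
    (hx : |x| ≤ l) (n : ℕ) :
    |a n * x ^ n / n !| ≤ C * (l ^ n / (R ^ n * (n ! : ℝ) ^ (1 - s))) := by
  have hfac : (0 : ℝ) < n ! := by positivity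
  calc |a n * x ^ n / n !| = |a n| * |x| ^ n / n ! := by
        rw [abs_div, abs_mul, abs_pow, Nat.abs_cast]
    _ ≤ C * (n ! : ℝ) ^ s / R ^ n * l ^ n / n ! := by
        gcongr
        · exact (abs_nonneg _).trans (h n)
        · exact h n
    _ = C * (l ^ n / (R ^ n * (n ! : ℝ) ^ (1 - s))) := by
        rw [Real.rpow_sub hfac, Real.rpow_one]
        field_simp

theorem summable_egf (h : GevreyBound s C R a) (hs : s < 1) (x : ℝ) :
    Summable fun n => a n * x ^ n / (n ! : ℝ) :=
  .of_norm_bounded ((summable_pow_div_pow_mul_factorial_rpow (sub_pos.2 hs) R |x|).mul_left C)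
    (h.abs_mul_pow_div_factorial_le le_rfl)

theorem abs_egf_le (h : GevreyBound s C R a) (hs : s < 1) {l x : ℝ} (hx : |x| ≤ l) :
    |egf a x| ≤ C * ∑' n : ℕ, l ^ n / (R ^ n * (n ! : ℝ) ^ (1 - s)) := by
  rw [← tsum_mul_left]
  exact (norm_tsum_le_tsum_norm (h.summable_egf hs x).norm).trans <|
    Summable.tsum_le_tsum (h.abs_mul_pow_div_factorial_le hx) (h.summable_egf hs x).norm
      ((summable_pow_div_pow_mul_factorial_rpow (sub_pos.2 hs) R l).mul_left C)

theorem egf_eq_add_tsum (h : GevreyBound s C R a) (hs : s < 1) (x : ℝ) :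
    egf a x = a 0 + ∑' n : ℕ, a (n + 1) * x ^ (n + 1) / ((n + 1)! : ℝ) := by
  rw [egf, (h.summable_egf hs x).tsum_eq_zero_add]
  simp

theorem hasDerivAt_egf (h : GevreyBound s C R a) (hs0 : 0 ≤ s) (hs1 : s < 1) (hR : 0 < R)
    (x : ℝ) : HasDerivAt (egf a) (egf (fun n => a (n + 1)) x) x := by
  have h1 := h.shift hs0 hR 1
  set r := |x| + 1
  have hterm : ∀ n y, HasDerivAt (fun z => a (n + 1) * z ^ (n + 1) / ((n + 1)! : ℝ))
      (a (n + 1) * y ^ n / (n ! : ℝ)) y := fun n y => by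
    refine (((hasDerivAt_pow (n + 1) y).const_mul (a (n + 1))).div_const _).congr_deriv ?_
    rw [Nat.factorial_succ, Nat.cast_mul]
    field_simp
    push_cast
    ring
  have hseries := hasDerivAt_tsum_of_isPreconnected
    ((summable_pow_div_pow_mul_factorial_rpow (sub_pos.2 hs1) (R / 2 ^ s) r).mul_left _)
    Metric.isOpen_ball (convex_ball 0 r).isPreconnected (fun n y _ => hterm n y)
    (fun n y hy => h1.abs_mul_pow_div_factorial_le (by simpa using (mem_ball_zero_iff.1 hy).le) n)
    (Metric.mem_ball_self (by positivity)) (by simp) (by simp [r] : x ∈ Metric.ball 0 r)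
  rw [funext (h.egf_eq_add_tsum hs1)]
  exact hseries.const_add (a 0)

theorem iteratedDeriv_egf (h : GevreyBound s C R a) (hs0 : 0 ≤ s) (hs1 : s < 1) (hR : 0 < R)
    (m : ℕ) : iteratedDeriv m (egf a) = egf fun n => a (n + m) := by
  induction m with
  | zero => simp
  | succ m ih =>
    ext x
    rw [iteratedDeriv_succ, ih]
    exact ((h.shift hs0 hR m).hasDerivAt_egf hs0 hs1 (by positivity) x).deriv.trans <| by
      simp only [add_assoc, add_comm 1 m]

theorem analyticOnNhd_egf (h : GevreyBound s C R a) (hs : s < 1) :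
    AnalyticOnNhd ℝ (egf a) univ := by
  set p := FormalMultilinearSeries.ofScalars ℝ fun n => a n / (n ! : ℝ)
  have hp : p.radius = ⊤ := by
    refine p.radius_eq_top_of_summable_norm fun r => .of_norm_bounded
      ((summable_pow_div_pow_mul_factorial_rpow (sub_pos.2 hs) R r).mul_left C) fun n => ?_
    have hterm := h.abs_mul_pow_div_factorial_le (NNReal.abs_eq r).le n
    rw [abs_div, abs_mul, abs_pow, NNReal.abs_eq, Nat.abs_cast] at hterm
    rwa [FormalMultilinearSeries.ofScalars_norm, norm_mul, norm_norm, norm_pow, NNReal.norm_eq,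
      Real.norm_eq_abs, abs_div, Nat.abs_cast, div_mul_eq_mul_div]
  have hsum : egf a = p.sum := by
    ext x
    rw [← FormalMultilinearSeries.ofScalarsSum, FormalMultilinearSeries.ofScalars_sum_eq]
    exact tsum_congr fun n => by rw [smul_eq_mul, div_mul_eq_mul_div]
  simpa [hsum, hp, Metric.eball_top] using p.analyticOnNhd

end GevreyBound

theorem stmt17_general (s : ℝ) (hs0 : 0 < s) (hs1 : s < 1) (a : ℕ → ℝ) (C R : ℝ)
    (hR : 0 < R)
    (ha : ∀ n : ℕ, |a n| ≤ C * (Nat.factorial n : ℝ) ^ s / R ^ n)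
    (f : ℝ → ℝ)
    (hf : ∀ x : ℝ, HasSum (fun n : ℕ => a n * x ^ n / (Nat.factorial n : ℝ)) (f x)) :
    AnalyticOnNhd ℝ f Set.univ ∧
      ∀ l : ℝ, 0 < l → ∀ m : ℕ, ∀ x ∈ Set.Icc (-l) l,
        |iteratedDeriv m f x| ≤
          C * (∑' k : ℕ, ((2 : ℝ) ^ s * l) ^ k /
                (R ^ k * (Nat.factorial k : ℝ) ^ (1 - s))) *
            ((2 : ℝ) ^ (s * (m : ℝ)) / R ^ m) * (Nat.factorial m : ℝ) ^ s := by
  have hG : GevreyBound s C R a := ha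
  obtain rfl : f = egf a := funext fun x => (hf x).tsum_eq.symm
  refine ⟨hG.analyticOnNhd_egf hs1, fun l _ m x hx => ?_⟩
  rw [hG.iteratedDeriv_egf hs0.le hs1 hR m]
  have h2s : (0 : ℝ) < 2 ^ s := by positivity
  calc |egf (fun n => a (n + m)) x|
      ≤ C * (2 ^ s / R) ^ m * (m ! : ℝ) ^ s *
          ∑' n : ℕ, l ^ n / ((R / 2 ^ s) ^ n * (n ! : ℝ) ^ (1 - s)) :=
        (hG.shift hs0.le hR m).abs_egf_le hs1 (abs_le.2 hx)
    _ = _ := by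
        rw [Real.rpow_mul_natCast zero_le_two, ← tsum_mul_left, ← tsum_mul_left,
          ← tsum_mul_right, ← tsum_mul_right]
        refine tsum_congr fun n => ?_
        rw [div_pow, div_pow, mul_pow]
        field_simp

/-- let `s ∈ (0,1)` and `(a_n)` with `|a_n| ≤ C (n!)^s / Rⁿ`. Then
`f(x) = Σ_{n≥0} a_n xⁿ/n!` defines an entire (real-analytic on `ℝ`) function which is
Gevrey of order `s` on every interval `[-l,l]`, with the explicit bound
`|f^{(m)}(x)| ≤ C (Σ_{k≥0} (2^s l)^k/(R^k (k!)^{1-s})) · 2^{sm}/R^m · (m!)^s`. -/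
theorem stmt17 (s : ℝ) (hs0 : 0 < s) (hs1 : s < 1) (a : ℕ → ℝ) (C R : ℝ)
    (hC : 0 < C) (hR : 0 < R)
    (ha : ∀ n : ℕ, |a n| ≤ C * (Nat.factorial n : ℝ) ^ s / R ^ n)
    (f : ℝ → ℝ)
    (hf : ∀ x : ℝ, HasSum (fun n : ℕ => a n * x ^ n / (Nat.factorial n : ℝ)) (f x)) :
    AnalyticOnNhd ℝ f Set.univ ∧
      ∀ l : ℝ, 0 < l → ∀ m : ℕ, ∀ x ∈ Set.Icc (-l) l,
        |iteratedDeriv m f x| ≤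
          C * (∑' k : ℕ, ((2 : ℝ) ^ s * l) ^ k /
                (R ^ k * (Nat.factorial k : ℝ) ^ (1 - s))) *
            ((2 : ℝ) ^ (s * (m : ℝ)) / R ^ m) * (Nat.factorial m : ℝ) ^ s :=
  stmt17_general s hs0 hs1 a C R hR ha f hf
end

section
/- Let a ≥ 0, R > e^{1/(3e)}(1+a)^{1/3}, and let y₁ : [-1,0] → ℝ be the restriction of a holomorphic function on the disk D(0,R) satisfying Pⁿy₁(0) = ∂ₓPⁿy₁(0) = 0 for all n ≥ 0, where P = ∂ₓ³ + a∂ₓ. Set b_n := ∂ₓ²Pⁿy₁(0). Then there exist H ∈ (0, e^{-1/e}) and C > 0 such that |b_n| ≤ C Hⁿ (3n)! for all n ≥ 0. -/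
/-!
Near `0`, `Pⁿ` acts as the polynomial `(X³ + aX)ⁿ` in `d/dz`, so
`∂²PⁿF(0) = ∑ₘ C(n,m) a^(n-m) F^(n+2m+2)(0)`. Cauchy's estimates on a circle of radius `r`,
`e^(1/(3e)) < r < R`, give `|F^(k)(0)| ≤ M k!/r^k`. Each factor `a` comes with two missing factorial
factors, each at least `n + 1`, so the sum is at most `M e^(ar²) (3n+2)!/r^(3n+2)`, which is
`O(Hⁿ (3n)!)` for every `H > r⁻³`; and `r⁻³ < e^(-1/e)`.
-/

/-- The operator `P = ∂ₓ³ + a ∂ₓ` of the paper. -/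
noncomputable def PopC (a : ℝ) (f : ℂ → ℂ) : ℂ → ℂ :=
  fun z => iteratedDeriv 3 f z + (a : ℂ) * deriv f z

open Polynomial Filter Topology
open scoped Nat

section DiffOp

variable {𝕜 E : Type*} [NontriviallyNormedField 𝕜] [NormedAddCommGroup E] [NormedSpace 𝕜 E]
  {F : 𝕜 → E} {z : 𝕜}

/-- `diffOp F p` is `p(d/dz) F`. -/
noncomputable def diffOp (F : 𝕜 → E) : 𝕜[X] →ₗ[𝕜] 𝕜 → E :=
  Polynomial.lsum fun k => LinearMap.id.smulRight (iteratedDeriv k F)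

theorem diffOp_monomial (F : 𝕜 → E) (k : ℕ) (c : 𝕜) :
    diffOp F (monomial k c) = c • iteratedDeriv k F := by
  simp [diffOp, sum_monomial_index]

theorem diffOp_one (F : 𝕜 → E) : diffOp F 1 = F := by
  simpa using diffOp_monomial F 0 1

theorem AnalyticAt.differentiableAt_diffOp [CompleteSpace E] (hF : AnalyticAt 𝕜 F z) (p : 𝕜[X]) :
    DifferentiableAt 𝕜 (diffOp F p) z := by
  induction p using Polynomial.induction_on' with
  | add p q hp hq => simpa using hp.add hq
  | monomial k c =>
    rw [diffOp_monomial, iteratedDeriv_eq_iterate]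
    exact ((hF.iterated_deriv k).differentiableAt).const_smul c

theorem AnalyticAt.deriv_diffOp [CompleteSpace E] (hF : AnalyticAt 𝕜 F z) (p : 𝕜[X]) :
    deriv (diffOp F p) z = diffOp F (X * p) z := by
  induction p using Polynomial.induction_on' with
  | add p q hp hq =>
    rw [map_add, deriv_add (hF.differentiableAt_diffOp p) (hF.differentiableAt_diffOp q),
      mul_add, map_add, Pi.add_apply, hp, hq]
  | monomial k c =>
    rw [X_mul_monomial, diffOp_monomial, diffOp_monomial, deriv_const_smul_field,
      iteratedDeriv_succ, Pi.smul_apply]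

theorem AnalyticAt.iteratedDeriv_diffOp_eventuallyEq [CompleteSpace E]
    (hF : AnalyticAt 𝕜 F z) (k : ℕ)
    (p : 𝕜[X]) : iteratedDeriv k (diffOp F p) =ᶠ[𝓝 z] diffOp F (X ^ k * p) := by
  induction k with
  | zero => simp
  | succ k ih =>
    rw [iteratedDeriv_succ]
    filter_upwards [ih.deriv, hF.eventually_analyticAt] with w hw hFw
    rw [hw, hFw.deriv_diffOp, ← mul_assoc, ← pow_succ']

end DiffOp

theorem Polynomial.X_sq_mul_X_pow_three_add_C_mul_X_pow_eq_sum {R : Type*} [CommSemiring R]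
    (c : R) (n : ℕ) :
    X ^ 2 * (X ^ 3 + C c * X) ^ n =
      ∑ m ∈ Finset.range (n + 1), C (n.choose m * c ^ (n - m)) * X ^ (n + 2 * m + 2) := by
  rw [add_pow, Finset.mul_sum]
  refine Finset.sum_congr rfl fun m hm => ?_
  have hmn : m ≤ n := Nat.lt_succ_iff.mp (Finset.mem_range.mp hm)
  rw [show n + 2 * m + 2 = 3 * m + (n - m) + 2 by omega, pow_add, pow_add, pow_mul]
  simp only [map_mul, map_pow, map_natCast, mul_pow]
  ring

theorem Filter.EventuallyEq.popC {a : ℝ} {f g : ℂ → ℂ} {z : ℂ} (h : f =ᶠ[𝓝 z] g) :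
    PopC a f =ᶠ[𝓝 z] PopC a g := by
  filter_upwards [h.eventuallyEq_nhds] with w hw
  simp only [PopC, hw.iteratedDeriv_eq, hw.deriv_eq]

theorem AnalyticAt.popC_diffOp_eventuallyEq {a : ℝ} {F : ℂ → ℂ} {z : ℂ} (hF : AnalyticAt ℂ F z)
    (p : ℂ[X]) : PopC a (diffOp F p) =ᶠ[𝓝 z] diffOp F ((X ^ 3 + C (a : ℂ) * X) * p) := by
  filter_upwards [hF.iteratedDeriv_diffOp_eventuallyEq 3 p,
    hF.iteratedDeriv_diffOp_eventuallyEq 1 p] with w h3 h1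
  rw [iteratedDeriv_one] at h1
  rw [PopC, h3, h1, pow_one, add_mul, mul_assoc, ← smul_eq_C_mul, map_add, map_smul]
  rfl

theorem AnalyticAt.popC_iterate_eventuallyEq {a : ℝ} {F : ℂ → ℂ} {z : ℂ} (hF : AnalyticAt ℂ F z)
    (n : ℕ) : (PopC a)^[n] F =ᶠ[𝓝 z] diffOp F ((X ^ 3 + C (a : ℂ) * X) ^ n) := by
  induction n with
  | zero => simp [diffOp_one]
  | succ n ih =>
    rw [Function.iterate_succ_apply', pow_succ']
    exact ih.popC.trans (hF.popC_diffOp_eventuallyEq _)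

theorem AnalyticAt.iteratedDeriv_two_popC_iterate {a : ℝ} {F : ℂ → ℂ} {z : ℂ}
    (hF : AnalyticAt ℂ F z) (n : ℕ) :
    iteratedDeriv 2 ((PopC a)^[n] F) z = ∑ m ∈ Finset.range (n + 1),
      (n.choose m * (a : ℂ) ^ (n - m)) * iteratedDeriv (n + 2 * m + 2) F z := by
  rw [(hF.popC_iterate_eventuallyEq n).iteratedDeriv_eq,
    (hF.iteratedDeriv_diffOp_eventuallyEq 2 _).eq_of_nhds,
    X_sq_mul_X_pow_three_add_C_mul_X_pow_eq_sum, map_sum, Finset.sum_apply]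
  simp only [C_mul_X_pow_eq_monomial, diffOp_monomial, Pi.smul_apply, smul_eq_mul]

theorem Complex.exists_norm_iteratedDeriv_le {F : ℂ → ℂ} {c : ℂ} {r R : ℝ} (hr : 0 < r)
    (hrR : r < R) (hF : DifferentiableOn ℂ F (Metric.ball c R)) :
    ∃ M > 0, ∀ k, ‖iteratedDeriv k F c‖ ≤ k ! * M / r ^ k := by
  have hFr : DifferentiableOn ℂ F (Metric.closedBall c r) :=
    hF.mono (Metric.closedBall_subset_ball hrR)
  obtain ⟨M, hM⟩ := (isCompact_sphere c r).exists_bound_of_continuousOn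
    (hFr.continuousOn.mono Metric.sphere_subset_closedBall)
  have hcl : DiffContOnCl ℂ F (Metric.ball c r) :=
    (closure_ball c hr.ne' ▸ hFr).diffContOnCl
  refine ⟨max M 1, by positivity, fun k => ?_⟩
  exact norm_iteratedDeriv_le_of_forall_mem_sphere_norm_le k hr hcl
    fun z hz => (hM z hz).trans (le_max_left _ _)

theorem pow_mul_factorial_div_pow_le {x r : ℝ} (hx : 0 ≤ x) (hr : 0 < r) {t k : ℕ} (ht : 0 < t)
    (htk : t ≤ k + 1) (i : ℕ) :
    x ^ i * (k ! / r ^ k) ≤ (x * r ^ 2 / t ^ 2) ^ i * ((k + 2 * i)! / r ^ (k + 2 * i)) := by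
  have hfact : (k ! * t ^ (2 * i) : ℝ) ≤ (k + 2 * i)! := by
    exact_mod_cast (Nat.mul_le_mul_left _ (Nat.pow_le_pow_left htk _)).trans
      Nat.factorial_mul_pow_le_factorial
  have ht' : (t : ℝ) ≠ 0 := by positivity
  calc x ^ i * (k ! / r ^ k) ≤ x ^ i * ((k + 2 * i)! / t ^ (2 * i) / r ^ k) := by
        gcongr
        rwa [le_div_iff₀ (by positivity)]
    _ = (x * r ^ 2 / t ^ 2) ^ i * ((k + 2 * i)! / r ^ (k + 2 * i)) := by
        rw [div_pow, mul_pow, ← pow_mul, ← pow_mul, pow_add]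
        field_simp

theorem one_add_div_sq_pow_le_exp {x : ℝ} (hx : 0 ≤ x) (n : ℕ) :
    (1 + x / (n + 1) ^ 2) ^ n ≤ Real.exp x := by
  calc (1 + x / (n + 1) ^ 2) ^ n ≤ Real.exp (x / (n + 1) ^ 2) ^ n := by
        gcongr
        linarith [Real.add_one_le_exp (x / (n + 1) ^ 2)]
    _ = Real.exp (n * x / (n + 1) ^ 2) := by rw [← Real.exp_nat_mul, mul_div_assoc]
    _ ≤ Real.exp x := by
        gcongr
        rw [div_le_iff₀ (by positivity)]
        nlinarith [sq_nonneg (n : ℝ)]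

theorem sum_choose_mul_pow_mul_factorial_div_pow_le {x r : ℝ} (hx : 0 ≤ x) (hr : 0 < r)
    (n : ℕ) :
    ∑ m ∈ Finset.range (n + 1), n.choose m * x ^ (n - m) * ((n + 2 * m + 2)! / r ^ (n + 2 * m + 2))
      ≤ Real.exp (x * r ^ 2) * ((3 * n + 2)! / r ^ (3 * n + 2)) := by
  calc _ ≤ ∑ m ∈ Finset.range (n + 1),
          n.choose m * (x * r ^ 2 / (n + 1 : ℕ) ^ 2) ^ (n - m) *
            ((3 * n + 2)! / r ^ (3 * n + 2)) := by
        refine Finset.sum_le_sum fun m hm => ?_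
        have hmn : m ≤ n := Nat.lt_succ_iff.mp (Finset.mem_range.mp hm)
        have key := pow_mul_factorial_div_pow_le hx hr (Nat.succ_pos n)
          (show n + 1 ≤ n + 2 * m + 2 + 1 by omega) (n - m)
        rw [show n + 2 * m + 2 + 2 * (n - m) = 3 * n + 2 by omega] at key
        rw [mul_assoc, mul_assoc]
        gcongr
    _ = (1 + x * r ^ 2 / (n + 1) ^ 2) ^ n * ((3 * n + 2)! / r ^ (3 * n + 2)) := by
        rw [← Finset.sum_mul, add_pow]
        congr 1
        refine Finset.sum_congr rfl fun m _ => ?_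
        push_cast
        ring
    _ ≤ Real.exp (x * r ^ 2) * ((3 * n + 2)! / r ^ (3 * n + 2)) := by
        gcongr
        exact one_add_div_sq_pow_le_exp (by positivity) n

theorem exists_factorial_div_pow_le {r H : ℝ} (hr : 0 < r) (hrH : (r ^ 3)⁻¹ < H) :
    ∃ C > 0, ∀ n : ℕ, (3 * n + 2)! / r ^ (3 * n + 2) ≤ C * H ^ n * (3 * n)! := by
  have hH : 0 < H := (by positivity : (0 : ℝ) < (r ^ 3)⁻¹).trans hrH
  set q := (r ^ 3 * H)⁻¹
  have hq0 : 0 ≤ q := by positivity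
  have hq1 : q < 1 := inv_lt_one_of_one_lt₀ ((inv_lt_iff_one_lt_mul₀' (by positivity)).mp hrH)
  have hlim : Tendsto (fun n : ℕ => ((3 * n + 1) * (3 * n + 2) : ℝ) * q ^ n) atTop (𝓝 0) := by
    have h2 := tendsto_pow_const_mul_const_pow_of_lt_one 2 hq0 hq1
    have h1 := tendsto_pow_const_mul_const_pow_of_lt_one 1 hq0 hq1
    have h0 := tendsto_pow_atTop_nhds_zero_of_lt_one hq0 hq1
    simpa using ((h2.const_mul 9).add ((h1.const_mul 9).add (h0.const_mul 2))).congr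
      fun n => by ring
  obtain ⟨K, hK⟩ := hlim.bddAbove_range
  replace hK : ∀ n : ℕ, ((3 * n + 1) * (3 * n + 2) : ℝ) * q ^ n ≤ K :=
    fun n => hK (Set.mem_range_self n)
  have hK0 : 0 < K := by
    have h0 := hK 0
    norm_num at h0
    linarith
  refine ⟨K / r ^ 2, by positivity, fun n => ?_⟩
  have hfac : ((3 * n + 2)! : ℝ) = (3 * n)! * ((3 * n + 1) * (3 * n + 2)) := by
    push_cast [Nat.factorial_succ]
    ring
  calc (3 * n + 2)! / r ^ (3 * n + 2)
      = ((3 * n + 1) * (3 * n + 2) : ℝ) * q ^ n / r ^ 2 * H ^ n * (3 * n)! := by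
        rw [hfac, inv_pow, mul_pow, ← pow_mul]
        field_simp
        ring
    _ ≤ K / r ^ 2 * H ^ n * (3 * n)! := by gcongr; exact hK n

theorem norm_iteratedDeriv_two_popC_iterate_le {a r M : ℝ} (ha : 0 ≤ a) (hr : 0 < r)
    {F : ℂ → ℂ} (hF : AnalyticAt ℂ F 0) (hM : ∀ k, ‖iteratedDeriv k F 0‖ ≤ k ! * M / r ^ k)
    (n : ℕ) :
    ‖iteratedDeriv 2 ((PopC a)^[n] F) 0‖ ≤
      M * (Real.exp (a * r ^ 2) * ((3 * n + 2)! / r ^ (3 * n + 2))) := by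
  have hM0 : 0 ≤ M := by simpa using (norm_nonneg _).trans (hM 0)
  rw [hF.iteratedDeriv_two_popC_iterate]
  calc _ ≤ ∑ m ∈ Finset.range (n + 1),
          ‖(n.choose m * (a : ℂ) ^ (n - m)) * iteratedDeriv (n + 2 * m + 2) F 0‖ :=
        norm_sum_le _ _
    _ ≤ ∑ m ∈ Finset.range (n + 1),
          M * (n.choose m * a ^ (n - m) * ((n + 2 * m + 2)! / r ^ (n + 2 * m + 2))) := by
        refine Finset.sum_le_sum fun m _ => ?_
        rw [norm_mul, norm_mul, norm_pow, Complex.norm_natCast, Complex.norm_real,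
          Real.norm_of_nonneg ha]
        calc _ ≤ n.choose m * a ^ (n - m) * ((n + 2 * m + 2)! * M / r ^ (n + 2 * m + 2)) := by
              gcongr
              exact hM _
          _ = _ := by ring
    _ ≤ M * (Real.exp (a * r ^ 2) * ((3 * n + 2)! / r ^ (3 * n + 2))) := by
        rw [← Finset.mul_sum]
        gcongr
        exact sum_choose_mul_pow_mul_factorial_div_pow_le ha hr n

theorem stmt18_general (a : ℝ) (ha : 0 ≤ a) (R : ℝ)
    (hR : R > Real.exp (1 / (3 * Real.exp 1)) * (1 + a) ^ ((1 : ℝ) / 3))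
    (F : ℂ → ℂ) (hF : DifferentiableOn ℂ F (Metric.ball (0 : ℂ) R)) :
    ∃ H C : ℝ, 0 < H ∧ H < Real.exp (-(1 / Real.exp 1)) ∧ 0 < C ∧
      ∀ n : ℕ, ‖iteratedDeriv 2 ((PopC a)^[n] F) 0‖ ≤
        C * H ^ n * (Nat.factorial (3 * n) : ℝ) := by
  set ρ := Real.exp (1 / (3 * Real.exp 1))
  have hρR : ρ < R := lt_of_le_of_lt (le_mul_of_one_le_right (Real.exp_pos _).le
    (Real.one_le_rpow (by linarith) (by norm_num))) hR
  obtain ⟨r, hρr, hrR⟩ := exists_between hρR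
  have hr : 0 < r := (Real.exp_pos _).trans hρr
  have hrE : (r ^ 3)⁻¹ < Real.exp (-(1 / Real.exp 1)) := by
    have hρ3 : ρ ^ 3 = Real.exp (1 / Real.exp 1) := by
      rw [← Real.exp_nat_mul]
      congr 1
      field_simp
      norm_num
    rw [Real.exp_neg, ← hρ3]
    gcongr
  obtain ⟨H, hrH, hHE⟩ := exists_between hrE
  have hH : 0 < H := (by positivity : (0 : ℝ) < (r ^ 3)⁻¹).trans hrH
  obtain ⟨M, hM, hMk⟩ := Complex.exists_norm_iteratedDeriv_le hr hrR hF
  have hFa : AnalyticAt ℂ F 0 := hF.analyticAt (Metric.ball_mem_nhds 0 (hr.trans hrR))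
  obtain ⟨C, hC, hCn⟩ := exists_factorial_div_pow_le hr hrH
  refine ⟨H, M * Real.exp (a * r ^ 2) * C, hH, hHE, by positivity, fun n => ?_⟩
  calc _ ≤ M * (Real.exp (a * r ^ 2) * (Nat.factorial (3 * n + 2) / r ^ (3 * n + 2))) :=
        norm_iteratedDeriv_two_popC_iterate_le ha hr hFa hMk n
    _ ≤ M * (Real.exp (a * r ^ 2) * (C * H ^ n * Nat.factorial (3 * n))) := by
        gcongr
        exact hCn n
    _ = _ := by ring

/-- let `a ≥ 0`, `R > e^{1/(3e)}(1+a)^{1/3}`, and let `y₁ : [-1,0] → ℝ`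
be the restriction of a holomorphic function `F` on `D(0,R)` satisfying
`Pⁿy₁(0) = ∂ₓPⁿy₁(0) = 0` for all `n ≥ 0`. With `b_n := ∂ₓ²Pⁿy₁(0)`, there exist
`H ∈ (0, e^{-1/e})` and `C > 0` with `|b_n| ≤ C Hⁿ (3n)!` for all `n ≥ 0`. -/
theorem stmt18 (a : ℝ) (ha : 0 ≤ a) (R : ℝ)
    (hR : R > Real.exp (1 / (3 * Real.exp 1)) * (1 + a) ^ ((1 : ℝ) / 3))
    (F : ℂ → ℂ) (hF : DifferentiableOn ℂ F (Metric.ball (0 : ℂ) R))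
    (y₁ : ℝ → ℝ) (hy₁ : ∀ x ∈ Set.Icc (-1 : ℝ) 0, F x = (y₁ x : ℂ))
    (h0 : ∀ n : ℕ, ((PopC a)^[n] F) 0 = 0)
    (h1 : ∀ n : ℕ, deriv ((PopC a)^[n] F) 0 = 0) :
    ∃ H C : ℝ, 0 < H ∧ H < Real.exp (-(1 / Real.exp 1)) ∧ 0 < C ∧
      ∀ n : ℕ, ‖iteratedDeriv 2 ((PopC a)^[n] F) 0‖ ≤
        C * H ^ n * (Nat.factorial (3 * n) : ℝ) :=
  stmt18_general a ha R hR F hF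
end

section
/- Let y₀ ∈ L²(ℝ) be supported in [-L,L], and let y(x,t) = (3t)^{-1/3} ∫_{-L}^{L} Ai((x-s)/(3t)^{1/3}) y₀(s) ds be the solution of ∂ₜy + ∂ₓ³y = 0 with y(·,0) = y₀. Then for all l > 0 and 0 < ε < T, y is Gevrey of order 1/3 in x and 1 in t on [-l,l]×[ε,T]: there exist K', R₁, R₂ > 0 with |∂ₓᵖ∂ₜ^q y(x,t)| ≤ (K'/(R₁ᵖ R₂^q)) (p!)^{1/3} q! ‖y₀‖_{L¹(-L,L)} for all p, q ∈ ℕ, x ∈ [-l,l], t ∈ [ε,T]. -/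
open MeasureTheory

open MeasureTheory intervalIntegral Metric



lemma airy_diff (Ai : ℝ → ℝ) (hAi : ContDiff ℝ (⊤ : ℕ∞) Ai) (n : ℕ) :
    Differentiable ℝ (iteratedDeriv n Ai) :=
  hAi.differentiable_iteratedDeriv n (by exact_mod_cast lt_top_iff_ne_top.mpr (by simp))

lemma airy_rec (Ai : ℝ → ℝ) (hAi : ContDiff ℝ (⊤ : ℕ∞) Ai)
    (hode : ∀ x : ℝ, iteratedDeriv 2 Ai x = x * Ai x) :
    ∀ m : ℕ, ∀ x : ℝ, iteratedDeriv (m + 3) Ai x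
      = x * iteratedDeriv (m + 1) Ai x + ((m : ℝ) + 1) * iteratedDeriv m Ai x := by
  have key : ∀ m n : ℕ, ∀ c : ℝ, ∀ x : ℝ,
      HasDerivAt (fun z => z * iteratedDeriv m Ai z + c * iteratedDeriv n Ai z)
        (iteratedDeriv m Ai x + x * iteratedDeriv (m + 1) Ai x
          + c * iteratedDeriv (n + 1) Ai x) x := by
    intro m n c x
    have h1 : HasDerivAt (fun z : ℝ => z * iteratedDeriv m Ai z)
        (1 * iteratedDeriv m Ai x + x * deriv (iteratedDeriv m Ai) x) x :=
      (hasDerivAt_id x).mul (airy_diff Ai hAi m x).hasDerivAt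
    have h2 : HasDerivAt (fun z : ℝ => c * iteratedDeriv n Ai z)
        (c * deriv (iteratedDeriv n Ai) x) x :=
      ((airy_diff Ai hAi n x).hasDerivAt).const_mul c
    have := h1.add h2
    exact this.congr_deriv (by simp [iteratedDeriv_succ])
  intro m
  induction m with
  | zero =>
    intro x
    have h0 : iteratedDeriv 2 Ai = fun z => z * iteratedDeriv 0 Ai z + 0 * iteratedDeriv 0 Ai z := by
      funext z; simpa using hode z
    have h1 : iteratedDeriv 3 Ai x = deriv (iteratedDeriv 2 Ai) x := by
      rw [iteratedDeriv_succ]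
    rw [h1, h0, (key 0 0 0 x).deriv]
    simp only [iteratedDeriv_zero]
    ring
  | succ k ih =>
    intro x
    have h0 : iteratedDeriv (k + 3) Ai
        = fun z => z * iteratedDeriv (k+1) Ai z + ((k:ℝ)+1) * iteratedDeriv k Ai z := by
      funext z; simpa using ih z
    have h1 : iteratedDeriv (k + 1 + 3) Ai x = deriv (iteratedDeriv (k + 3) Ai) x := by
      rw [show k + 1 + 3 = (k + 3) + 1 by ring, iteratedDeriv_succ]
    rw [h1, h0, (key (k+1) k ((k:ℝ)+1) x).deriv]
    push_cast
    ring



lemma fact_rpow_le (a b : ℕ) (h : a ≤ b) :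
    (Nat.factorial a : ℝ) ^ ((1:ℝ)/3) ≤ (Nat.factorial b : ℝ) ^ ((1:ℝ)/3) :=
  Real.rpow_le_rpow (by positivity) (by exact_mod_cast Nat.factorial_le h) (by norm_num)

lemma airy_gevrey (Ai : ℝ → ℝ) (hAi : ContDiff ℝ (⊤ : ℕ∞) Ai)
    (hode : ∀ x : ℝ, iteratedDeriv 2 Ai x = x * Ai x) (b : ℝ) :
    ∃ C M : ℝ, 1 ≤ C ∧ 1 ≤ M ∧ ∀ m : ℕ, ∀ x : ℝ, |x| ≤ b →
      |iteratedDeriv m Ai x| ≤ C * M ^ m * (Nat.factorial m : ℝ) ^ ((1:ℝ)/3) := by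
  set b' : ℝ := max b 1 with hb'
  have hb1 : 1 ≤ b' := le_max_right _ _
  obtain ⟨C₀, hC₀⟩ := (isCompact_Icc (a := -b') (b := b')).exists_bound_of_continuousOn
    (hAi.continuous.continuousOn)
  obtain ⟨C₁, hC₁⟩ := (isCompact_Icc (a := -b') (b := b')).exists_bound_of_continuousOn
    ((hAi.continuous_iteratedDeriv 1 (by exact_mod_cast le_top)).continuousOn)
  set C : ℝ := max (max C₀ C₁) 1 with hC
  have hC1 : 1 ≤ C := le_max_right _ _
  set M : ℝ := b' + 1 with hM
  have hM1 : 1 ≤ M := by simp only [hM]; linarith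
  have hMpos : 0 < M := by linarith
  refine ⟨C, M, hC1, hM1, ?_⟩
  have main : ∀ m : ℕ, ∀ x : ℝ, |x| ≤ b' →
      |iteratedDeriv m Ai x| ≤ C * M ^ m * (Nat.factorial m : ℝ) ^ ((1:ℝ)/3) := by
    intro m
    induction m using Nat.strong_induction_on with
    | _ m ih =>
      match m with
      | 0 =>
        intro x hx
        have hmem : x ∈ Set.Icc (-b') b' := abs_le.mp hx |> fun h => ⟨h.1, h.2⟩
        have := hC₀ x hmem
        simp only [Real.norm_eq_abs] at this
        have h1 : (1:ℝ) ≤ ((Nat.factorial 0 : ℕ) : ℝ) ^ ((1:ℝ)/3) := by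
          norm_num
        calc |iteratedDeriv 0 Ai x| = |Ai x| := by rw [iteratedDeriv_zero]
          _ ≤ C₀ := this
          _ ≤ C := le_trans (le_max_left _ _) (le_max_left _ _)
          _ ≤ C * M ^ 0 * ((Nat.factorial 0 : ℕ) : ℝ) ^ ((1:ℝ)/3) := by
              nlinarith [hC1]
      | 1 =>
        intro x hx
        have hmem : x ∈ Set.Icc (-b') b' := abs_le.mp hx |> fun h => ⟨h.1, h.2⟩
        have := hC₁ x hmem
        simp only [Real.norm_eq_abs] at this
        calc |iteratedDeriv 1 Ai x| ≤ C₁ := this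
          _ ≤ C := le_trans (le_max_right _ _) (le_max_left _ _)
          _ ≤ C * M ^ 1 * ((Nat.factorial 1 : ℕ) : ℝ) ^ ((1:ℝ)/3) := by
              simp only [Nat.factorial_one, Nat.cast_one, Real.one_rpow, mul_one, pow_one]
              nlinarith [hC1]
      | 2 =>
        intro x hx
        have hmem : x ∈ Set.Icc (-b') b' := abs_le.mp hx |> fun h => ⟨h.1, h.2⟩
        have h0 := hC₀ x hmem
        simp only [Real.norm_eq_abs] at h0
        have hfa : (1:ℝ) ≤ ((Nat.factorial 2 : ℕ) : ℝ) ^ ((1:ℝ)/3) := by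
          apply Real.one_le_rpow (by norm_num) (by norm_num)
        have hAx : |Ai x| ≤ C := le_trans h0 (le_trans (le_max_left _ _) (le_max_left _ _))
        calc |iteratedDeriv 2 Ai x| = |x * Ai x| := by rw [hode]
          _ = |x| * |Ai x| := abs_mul _ _
          _ ≤ b' * C := by
              apply mul_le_mul hx hAx (abs_nonneg _) (by linarith)
          _ ≤ C * M ^ 2 * 1 := by
              have hbM : b' ≤ M ^ 2 := by simp only [hM]; nlinarith
              have := mul_le_mul_of_nonneg_right hbM (show (0:ℝ) ≤ C by linarith)
              linarith
          _ ≤ C * M ^ 2 * ((Nat.factorial 2 : ℕ) : ℝ) ^ ((1:ℝ)/3) := by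
              have h2 : (0:ℝ) ≤ C * M ^ 2 := by positivity
              calc C * M ^ 2 * 1 = C * M ^ 2 := mul_one _
                _ ≤ C * M ^ 2 * ((Nat.factorial 2 : ℕ) : ℝ) ^ ((1:ℝ)/3) := by
                    nlinarith [mul_le_mul_of_nonneg_left hfa h2]
      | (j + 3) =>
        intro x hx
        have ih1 := ih (j + 1) (by omega) x hx
        have ih0 := ih j (by omega) x hx
        have hrec := airy_rec Ai hAi hode j x
        -- bound pieces
        have key1 : ((j:ℝ) + 1) * ((Nat.factorial j : ℕ) : ℝ) ^ ((1:ℝ)/3)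
            ≤ ((Nat.factorial (j + 3) : ℕ) : ℝ) ^ ((1:ℝ)/3) := by
          have hnat : (j + 1) ^ 3 * Nat.factorial j ≤ Nat.factorial (j + 3) := by
            have : Nat.factorial (j + 3) = (j+3) * ((j+2) * ((j+1) * Nat.factorial j)) := by
              simp [Nat.factorial_succ]
            rw [this]
            have : (j+1)^3 ≤ (j+3) * ((j+2) * (j+1)) := by nlinarith
            calc (j + 1) ^ 3 * Nat.factorial j ≤ ((j+3) * ((j+2) * (j+1))) * Nat.factorial j :=
                  Nat.mul_le_mul_right _ this
              _ = (j+3) * ((j+2) * ((j+1) * Nat.factorial j)) := by ring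
          have h1 : ((j:ℝ) + 1) * ((Nat.factorial j : ℕ) : ℝ) ^ ((1:ℝ)/3)
              = ((((j+1)^3 * Nat.factorial j : ℕ) : ℝ)) ^ ((1:ℝ)/3) := by
            rw [Nat.cast_mul, Real.mul_rpow (by positivity) (by positivity)]
            congr 1
            rw [show (((j+1)^3 : ℕ) : ℝ) = ((j:ℝ)+1)^(3:ℕ) by push_cast; ring]
            rw [← Real.rpow_natCast ((j:ℝ)+1) 3, ← Real.rpow_mul (by positivity)]
            norm_num
          rw [h1]
          exact Real.rpow_le_rpow (by positivity) (by exact_mod_cast hnat) (by norm_num)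
        have key2 : ((Nat.factorial (j+1) : ℕ) : ℝ) ^ ((1:ℝ)/3)
            ≤ ((Nat.factorial (j + 3) : ℕ) : ℝ) ^ ((1:ℝ)/3) :=
          fact_rpow_le _ _ (by omega)
        have hMj : (0:ℝ) < M ^ j := pow_pos hMpos j
        have hfj : (0:ℝ) ≤ ((Nat.factorial (j+3) : ℕ) : ℝ) ^ ((1:ℝ)/3) := by positivity
        calc |iteratedDeriv (j + 3) Ai x|
            = |x * iteratedDeriv (j + 1) Ai x + ((j:ℝ) + 1) * iteratedDeriv j Ai x| := by
              rw [hrec]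
          _ ≤ |x| * |iteratedDeriv (j+1) Ai x| + ((j:ℝ)+1) * |iteratedDeriv j Ai x| := by
              refine (abs_add_le _ _).trans (le_of_eq ?_)
              rw [abs_mul, abs_mul, abs_of_nonneg (show (0:ℝ) ≤ (j:ℝ)+1 by positivity)]
          _ ≤ b' * (C * M ^ (j+1) * ((Nat.factorial (j+1) : ℕ) : ℝ) ^ ((1:ℝ)/3))
              + ((j:ℝ)+1) * (C * M ^ j * ((Nat.factorial j : ℕ) : ℝ) ^ ((1:ℝ)/3)) := by
              gcongr <;> first
                | exact hx
                | exact abs_nonneg _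
                | positivity
          _ ≤ b' * (C * M ^ (j+1) * ((Nat.factorial (j+3) : ℕ) : ℝ) ^ ((1:ℝ)/3))
              + C * M ^ j * (((Nat.factorial (j+3) : ℕ) : ℝ) ^ ((1:ℝ)/3)) := by
              have hb0 : (0:ℝ) ≤ b' := by linarith
              have hC0 : (0:ℝ) ≤ C := by linarith
              have e1 : ((j:ℝ)+1) * (C * M ^ j * ((Nat.factorial j : ℕ) : ℝ) ^ ((1:ℝ)/3))
                  = C * M ^ j * (((j:ℝ)+1) * ((Nat.factorial j : ℕ) : ℝ) ^ ((1:ℝ)/3)) := by ring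
              rw [e1]
              gcongr
          _ = C * M ^ j * ((Nat.factorial (j+3) : ℕ) : ℝ) ^ ((1:ℝ)/3) * (b' * M + 1) := by ring
          _ ≤ C * M ^ j * ((Nat.factorial (j+3) : ℕ) : ℝ) ^ ((1:ℝ)/3) * M ^ 3 := by
              have hbM3 : b' * M + 1 ≤ M ^ 3 := by
                have hb0 : (0:ℝ) ≤ b' := by linarith
                simp only [hM]; nlinarith [pow_nonneg hb0 3, sq_nonneg b', hb0]
              have hpos : (0:ℝ) ≤ C * M ^ j * ((Nat.factorial (j+3) : ℕ) : ℝ) ^ ((1:ℝ)/3) := by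
                positivity
              exact mul_le_mul_of_nonneg_left hbM3 hpos
          _ = C * M ^ (j+3) * ((Nat.factorial (j+3) : ℕ) : ℝ) ^ ((1:ℝ)/3) := by ring
  intro m x hx
  exact main m x (le_trans hx (le_max_left _ _))



noncomputable def airyE (Ai : ℝ → ℝ) (m : ℕ) (x t : ℝ) : ℝ :=
  (3 * t) ^ (-((m : ℝ) + 1) / 3) * iteratedDeriv m Ai (x * (3 * t) ^ (-(1 : ℝ) / 3))

lemma airyE_hasDerivAt_x (Ai : ℝ → ℝ) (hAi : ContDiff ℝ (⊤ : ℕ∞) Ai) (m : ℕ) (x t : ℝ) (ht : 0 < t) :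
    HasDerivAt (fun x' => airyE Ai m x' t) (airyE Ai (m + 1) x t) x := by
  have hP : (0:ℝ) < 3 * t := by linarith
  set c : ℝ := (3 * t) ^ (-(1:ℝ)/3) with hc
  have hinner : HasDerivAt (fun x' : ℝ => x' * c) c x := by
    simpa using (hasDerivAt_id x).mul_const c
  have houter : HasDerivAt (iteratedDeriv m Ai) (iteratedDeriv (m+1) Ai (x * c)) (x * c) := by
    have := (airy_diff Ai hAi m (x * c)).hasDerivAt
    rwa [← iteratedDeriv_succ] at this
  have hcomp := (houter.comp x hinner).const_mul ((3 * t) ^ (-((m:ℝ) + 1) / 3))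
  have key : (3 * t) ^ (-((m:ℝ) + 1) / 3) * (iteratedDeriv (m+1) Ai (x * c) * c)
      = airyE Ai (m+1) x t := by
    rw [airyE, hc, mul_comm (iteratedDeriv (m+1) Ai _) ((3*t) ^ (-(1:ℝ)/3)), ← mul_assoc,
      ← Real.rpow_add hP]
    congr 2
    push_cast
    ring
  rw [key] at hcomp
  exact hcomp

lemma airyE_hasDerivAt_t (Ai : ℝ → ℝ) (hAi : ContDiff ℝ (⊤ : ℕ∞) Ai)
    (hode : ∀ x : ℝ, iteratedDeriv 2 Ai x = x * Ai x)
    (m : ℕ) (x t : ℝ) (ht : 0 < t) :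
    HasDerivAt (fun t' => airyE Ai m x t') (-(airyE Ai (m + 3) x t)) t := by
  have hP : (0:ℝ) < 3 * t := by linarith
  have hPne : (3:ℝ) * t ≠ 0 := ne_of_gt hP
  have h3t : HasDerivAt (fun t' : ℝ => 3 * t') 3 t := by
    simpa using (hasDerivAt_id t).const_mul 3
  -- prefactor
  have hpre : HasDerivAt (fun t' : ℝ => (3 * t') ^ (-((m:ℝ) + 1) / 3))
      ((-((m:ℝ) + 1) / 3) * (3*t) ^ (-((m:ℝ) + 1) / 3 - 1) * 3) t := by
    have hr := Real.hasDerivAt_rpow_const (x := 3 * t) (p := -((m:ℝ) + 1) / 3) (Or.inl hPne)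
    have := hr.comp t h3t
    simpa [Function.comp_def] using this
  -- inner argument
  have harg : HasDerivAt (fun t' : ℝ => x * (3 * t') ^ (-(1:ℝ)/3))
      (x * ((-(1:ℝ)/3) * (3*t) ^ (-(1:ℝ)/3 - 1) * 3)) t := by
    have hr := Real.hasDerivAt_rpow_const (x := 3 * t) (p := -(1:ℝ)/3) (Or.inl hPne)
    have h2 := (hr.comp t h3t).const_mul x
    simpa [Function.comp_def] using h2
  -- outer Ai^{(m)}
  have houter : HasDerivAt (iteratedDeriv m Ai)
      (iteratedDeriv (m+1) Ai (x * (3*t) ^ (-(1:ℝ)/3))) (x * (3*t) ^ (-(1:ℝ)/3)) := by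
    have := (airy_diff Ai hAi m (x * (3*t) ^ (-(1:ℝ)/3))).hasDerivAt
    rwa [← iteratedDeriv_succ] at this
  have hmul := hpre.mul (houter.comp t harg)
  have key : (-((m:ℝ) + 1) / 3) * (3*t) ^ (-((m:ℝ) + 1) / 3 - 1) * 3
        * iteratedDeriv m Ai (x * (3*t) ^ (-(1:ℝ)/3))
      + (3*t) ^ (-((m:ℝ) + 1) / 3)
        * (iteratedDeriv (m+1) Ai (x * (3*t) ^ (-(1:ℝ)/3))
            * (x * ((-(1:ℝ)/3) * (3*t) ^ (-(1:ℝ)/3 - 1) * 3)))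
      = -(airyE Ai (m + 3) x t) := by
    rw [airyE, airy_rec Ai hAi hode m (x * (3*t) ^ (-(1:ℝ)/3))]
    push_cast
    rw [show -((m:ℝ)+3+1)/3 = -((m:ℝ)+1)/3 - 1 from by ring]
    rw [Real.rpow_sub hP, Real.rpow_sub hP, Real.rpow_one]
    field_simp
    ring
  simp only [Function.comp_def] at hmul
  rw [key] at hmul
  exact hmul




lemma airyE_cont (Ai : ℝ → ℝ) (hAi : ContDiff ℝ (⊤ : ℕ∞) Ai) (m : ℕ) (t : ℝ) (x : ℝ) (ht : 0 < t) :
    Continuous (fun s : ℝ => airyE Ai m (x - s) t) := by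
  unfold airyE
  exact continuous_const.mul ((hAi.continuous_iteratedDeriv m (by exact_mod_cast le_top)).comp
    (((continuous_const.sub continuous_id).mul continuous_const)))

lemma abs_airyE_le (Ai : ℝ → ℝ) (m : ℕ) (z t C : ℝ) (ht : 0 < t)
    (hb : |iteratedDeriv m Ai (z * (3 * t) ^ (-(1:ℝ)/3))| ≤ C) :
    |airyE Ai m z t| ≤ (3 * t) ^ (-((m:ℝ) + 1) / 3) * C := by
  have hP : (0:ℝ) < 3 * t := by linarith
  rw [airyE, abs_mul, abs_of_nonneg (Real.rpow_nonneg hP.le _)]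
  exact mul_le_mul_of_nonneg_left hb (Real.rpow_nonneg hP.le _)

lemma abs_s_le (L : ℝ) {s : ℝ} (hs : s ∈ Set.uIoc (-L) L) : |s| ≤ |L| := by
  have hs' : s ∈ Set.uIcc (-L) L := Set.uIoc_subset_uIcc hs
  rcases Set.mem_uIcc.mp hs' with ⟨h1, h2⟩ | ⟨h1, h2⟩ <;>
    rcases abs_cases L with ⟨e1, e2⟩ | ⟨e1, e2⟩ <;>
    rw [abs_le] <;> constructor <;> linarith

lemma u_int (Ai : ℝ → ℝ) (hAi : ContDiff ℝ (⊤ : ℕ∞) Ai)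
    (L : ℝ) (y₀ : ℝ → ℝ)
    (hy₀int : IntervalIntegrable y₀ volume (-L) L) (m : ℕ) (x t : ℝ) (ht : 0 < t) :
    IntervalIntegrable (fun s => airyE Ai m (x - s) t * y₀ s) volume (-L) L :=
  hy₀int.continuousOn_mul (airyE_cont Ai hAi m t x ht).continuousOn

lemma u_hasDerivAt_x (Ai : ℝ → ℝ) (hAi : ContDiff ℝ (⊤ : ℕ∞) Ai)
    (hode : ∀ x : ℝ, iteratedDeriv 2 Ai x = x * Ai x)
    (L : ℝ) (y₀ : ℝ → ℝ) (hy₀m : AEStronglyMeasurable y₀ volume)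
    (hy₀int : IntervalIntegrable y₀ volume (-L) L) (m : ℕ) (x t : ℝ) (ht : 0 < t) :
    HasDerivAt (fun x' => ∫ s in (-L)..L, airyE Ai m (x' - s) t * y₀ s)
      (∫ s in (-L)..L, airyE Ai (m + 1) (x - s) t * y₀ s) x := by
  have hP : (0:ℝ) < 3 * t := by linarith
  set b : ℝ := (|x| + 1 + |L|) * (3 * t) ^ (-(1:ℝ)/3) with hbdef
  obtain ⟨C, M, hC, hM, hCM⟩ := airy_gevrey Ai hAi hode b
  set K : ℝ := (3 * t) ^ (-(((m:ℝ)+1) + 1) / 3) * (C * M ^ (m+1) * (Nat.factorial (m+1) : ℝ) ^ ((1:ℝ)/3))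
    with hKdef
  have main := (intervalIntegral.hasDerivAt_integral_of_dominated_loc_of_deriv_le
    (F := fun x' s => airyE Ai m (x' - s) t * y₀ s)
    (F' := fun x' s => airyE Ai (m+1) (x' - s) t * y₀ s)
    (bound := fun s => K * |y₀ s|) (a := -L) (b := L) (μ := volume) (x₀ := x)
    (s := ball x 1) (ball_mem_nhds x one_pos)
    (Filter.Eventually.of_forall fun x' =>
      ((airyE_cont Ai hAi m t x' ht).aestronglyMeasurable).mul hy₀m.restrict)
    (u_int Ai hAi L y₀ hy₀int m x t ht)
    (((airyE_cont Ai hAi (m+1) t x ht).aestronglyMeasurable).mul hy₀m.restrict)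
    ?_ ((hy₀int.abs).const_mul K) ?_).2
  · exact main
  · -- bound
    refine Filter.Eventually.of_forall fun s hs x' hx' => ?_
    have hsL : |s| ≤ |L| := abs_s_le L hs
    have hx'x : |x'| ≤ |x| + 1 := by
      have h1 := mem_ball_iff_norm.mp hx'
      rw [Real.norm_eq_abs] at h1
      have h2 := abs_sub_abs_le_abs_sub x' x
      linarith
    have hz : |(x' - s) * (3 * t) ^ (-(1:ℝ)/3)| ≤ b := by
      rw [abs_mul, abs_of_nonneg (Real.rpow_nonneg hP.le _), hbdef]
      apply mul_le_mul_of_nonneg_right _ (Real.rpow_nonneg hP.le _)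
      calc |x' - s| ≤ |x'| + |s| := abs_sub _ _
        _ ≤ |x| + 1 + |L| := by linarith
    have hb := hCM (m+1) _ hz
    rw [Real.norm_eq_abs, abs_mul]
    have h1 := abs_airyE_le Ai (m+1) (x' - s) t _ ht hb
    rw [hKdef]
    push_cast at h1 ⊢
    calc |airyE Ai (m+1) (x' - s) t| * |y₀ s|
        ≤ ((3 * t) ^ (-(((m:ℝ)+1) + 1) / 3) * (C * M ^ (m+1) * (Nat.factorial (m+1) : ℝ) ^ ((1:ℝ)/3))) * |y₀ s| := by
          apply mul_le_mul_of_nonneg_right _ (abs_nonneg _)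
          convert h1 using 3 <;> push_cast <;> ring
      _ = _ := by push_cast; ring
  · -- differentiability
    refine Filter.Eventually.of_forall fun s hs x' hx' => ?_
    have h := airyE_hasDerivAt_x Ai hAi m (x' - s) t ht
    have h2 : HasDerivAt (fun u => airyE Ai m (u - s) t) (airyE Ai (m+1) (x' - s) t) x' := by
      have := h.comp x' ((hasDerivAt_id x').sub_const s)
      simpa [Function.comp_def] using this
    exact h2.mul_const (y₀ s)

lemma u_hasDerivAt_t (Ai : ℝ → ℝ) (hAi : ContDiff ℝ (⊤ : ℕ∞) Ai)
    (hode : ∀ x : ℝ, iteratedDeriv 2 Ai x = x * Ai x)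
    (L : ℝ) (y₀ : ℝ → ℝ) (hy₀m : AEStronglyMeasurable y₀ volume)
    (hy₀int : IntervalIntegrable y₀ volume (-L) L) (m : ℕ) (x t : ℝ) (ht : 0 < t) :
    HasDerivAt (fun t' => ∫ s in (-L)..L, airyE Ai m (x - s) t' * y₀ s)
      (-(∫ s in (-L)..L, airyE Ai (m + 3) (x - s) t * y₀ s)) t := by
  have ht2 : (0:ℝ) < t / 2 := by linarith
  have hP2 : (0:ℝ) < 3 * (t / 2) := by linarith
  set b : ℝ := (|x| + |L|) * (3 * (t/2)) ^ (-(1:ℝ)/3) with hbdef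
  obtain ⟨C, M, hC, hM, hCM⟩ := airy_gevrey Ai hAi hode b
  set K : ℝ := (3 * (t/2)) ^ (-(((m:ℝ)+3) + 1) / 3)
      * (C * M ^ (m+3) * (Nat.factorial (m+3) : ℝ) ^ ((1:ℝ)/3)) with hKdef
  have hball : ∀ t' ∈ ball t (t/2), 0 < t' ∧ t/2 ≤ t' := by
    intro t' ht'
    have h1 := mem_ball_iff_norm.mp ht'
    rw [Real.norm_eq_abs] at h1
    cases abs_cases (t' - t) with
    | inl h => exact ⟨by linarith [h.1], by linarith [h.1]⟩
    | inr h => constructor <;> linarith [h.1]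
  have main := (intervalIntegral.hasDerivAt_integral_of_dominated_loc_of_deriv_le
    (F := fun t' s => airyE Ai m (x - s) t' * y₀ s)
    (F' := fun t' s => -(airyE Ai (m+3) (x - s) t') * y₀ s)
    (bound := fun s => K * |y₀ s|) (a := -L) (b := L) (μ := volume) (x₀ := t)
    (s := ball t (t/2)) (ball_mem_nhds t ht2)
    (Filter.Eventually.of_forall ?_)
    (u_int Ai hAi L y₀ hy₀int m x t ht)
    ((((airyE_cont Ai hAi (m+3) t x ht).neg).aestronglyMeasurable).mul hy₀m.restrict)
    ?_ ((hy₀int.abs).const_mul K) ?_).2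
  · have heq : (∫ s in (-L)..L, -(airyE Ai (m+3) (x - s) t) * y₀ s)
        = -(∫ s in (-L)..L, airyE Ai (m+3) (x - s) t * y₀ s) := by
      rw [← intervalIntegral.integral_neg]
      congr 1; funext s; ring
    rwa [heq] at main
  · -- measurability for t' near t : need for all t' (only eventually needed)
    intro t'
    by_cases ht' : 0 < t'
    · exact ((airyE_cont Ai hAi m t' x ht').aestronglyMeasurable).mul hy₀m.restrict
    · -- for t' ≤ 0, airyE still measurable: it's cont in s anyway? (3t')^rpow defined;
      -- iteratedDeriv m Ai continuous regardless; inner function continuous in s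
      refine (Continuous.aestronglyMeasurable ?_).mul hy₀m.restrict
      unfold airyE
      exact continuous_const.mul
        ((hAi.continuous_iteratedDeriv m (by exact_mod_cast le_top)).comp
          (((continuous_const.sub continuous_id).mul continuous_const)))
  · -- bound
    refine Filter.Eventually.of_forall fun s hs t' ht' => ?_
    obtain ⟨ht'0, ht'2⟩ := hball t' ht'
    have hP' : (0:ℝ) < 3 * t' := by linarith
    have hsL : |s| ≤ |L| := abs_s_le L hs
    have hmono : ∀ e : ℝ, e ≤ 0 → (3 * t') ^ e ≤ (3 * (t/2)) ^ e := fun e he =>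
      Real.rpow_le_rpow_of_nonpos hP2 (by linarith) he
    have hz : |(x - s) * (3 * t') ^ (-(1:ℝ)/3)| ≤ b := by
      rw [abs_mul, abs_of_nonneg (Real.rpow_nonneg hP'.le _), hbdef]
      have h1 : |x - s| ≤ |x| + |L| := (abs_sub _ _).trans (by linarith)
      have h2 : (3 * t') ^ (-(1:ℝ)/3) ≤ (3 * (t/2)) ^ (-(1:ℝ)/3) :=
        hmono _ (by norm_num)
      exact mul_le_mul h1 h2 (Real.rpow_nonneg hP'.le _) (by positivity)
    have hb := hCM (m+3) _ hz
    rw [Real.norm_eq_abs, abs_mul, abs_neg]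
    have h1 := abs_airyE_le Ai (m+3) (x - s) t' _ ht'0 hb
    have h2 : (3 * t') ^ (-(((m:ℝ)+3) + 1) / 3) ≤ (3 * (t/2)) ^ (-(((m:ℝ)+3) + 1) / 3) := by
      apply hmono
      have : (0:ℝ) ≤ (m:ℝ) := Nat.cast_nonneg m
      linarith [div_nonneg (by linarith : (0:ℝ) ≤ (m:ℝ) + 3 + 1) (by norm_num : (0:ℝ) ≤ 3)]
    rw [hKdef]
    have hCMf : (0:ℝ) ≤ C * M ^ (m+3) * (Nat.factorial (m+3) : ℝ) ^ ((1:ℝ)/3) := by positivity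
    calc |airyE Ai (m+3) (x - s) t'| * |y₀ s|
        ≤ ((3 * t') ^ (-(((m:ℝ)+3) + 1) / 3)
            * (C * M ^ (m+3) * (Nat.factorial (m+3) : ℝ) ^ ((1:ℝ)/3))) * |y₀ s| := by
          apply mul_le_mul_of_nonneg_right _ (abs_nonneg _)
          convert h1 using 3
          · rfl
          · push_cast; ring
      _ ≤ ((3 * (t/2)) ^ (-(((m:ℝ)+3) + 1) / 3)
            * (C * M ^ (m+3) * (Nat.factorial (m+3) : ℝ) ^ ((1:ℝ)/3))) * |y₀ s| := by
          apply mul_le_mul_of_nonneg_right _ (abs_nonneg _)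
          exact mul_le_mul_of_nonneg_right h2 hCMf
  · -- differentiability
    refine Filter.Eventually.of_forall fun s hs t' ht' => ?_
    obtain ⟨ht'0, _⟩ := hball t' ht'
    exact (airyE_hasDerivAt_t Ai hAi hode m (x - s) t' ht'0).mul_const (y₀ s)


lemma fact_three_mul (q : ℕ) : Nat.factorial (3*q) ≤ 27^q * (Nat.factorial q)^3 := by
  induction q with
  | zero => simp
  | succ k ih =>
    have h1 : 3 * (k+1) = (3*k) + 3 := by ring
    rw [h1]
    have h2 : Nat.factorial (3*k + 3) = (3*k+3) * ((3*k+2) * ((3*k+1) * Nat.factorial (3*k))) := by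
      simp [Nat.factorial_succ]
    rw [h2]
    calc (3*k+3) * ((3*k+2) * ((3*k+1) * Nat.factorial (3*k)))
        ≤ (3*k+3) * ((3*k+3) * ((3*k+3) * Nat.factorial (3*k))) := by
          apply Nat.mul_le_mul_left
          apply Nat.mul_le_mul (by omega)
          exact Nat.mul_le_mul (by omega) le_rfl
      _ = 27 * (k+1)^3 * Nat.factorial (3*k) := by ring
      _ ≤ 27 * (k+1)^3 * (27^k * (Nat.factorial k)^3) := Nat.mul_le_mul_left _ ih
      _ = 27^(k+1) * ((k+1) * Nat.factorial k)^3 := by ring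
      _ = 27^(k+1) * (Nat.factorial (k+1))^3 := by rw [Nat.factorial_succ]

lemma choose_le_two_pow' (n k : ℕ) (h : k ≤ n) : n.choose k ≤ 2^n := by
  calc n.choose k ≤ ∑ i ∈ Finset.range (n+1), n.choose i :=
        Finset.single_le_sum (fun i _ => Nat.zero_le _) (Finset.mem_range.mpr (by omega))
    _ = 2^n := Nat.sum_range_choose n

lemma fact_add_le (p n : ℕ) : Nat.factorial (n + p) ≤ 2^(n+p) * (Nat.factorial p * Nat.factorial n) := by
  have h := Nat.add_choose_mul_factorial_mul_factorial n p
  have h2 : (n+p).choose p ≤ 2^(n+p) := choose_le_two_pow' _ _ (by omega)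
  calc Nat.factorial (n+p) = (n+p).choose p * Nat.factorial n * Nat.factorial p := h.symm
    _ ≤ 2^(n+p) * Nat.factorial n * Nat.factorial p :=
        Nat.mul_le_mul_right _ (Nat.mul_le_mul_right _ h2)
    _ = 2^(n+p) * (Nat.factorial p * Nat.factorial n) := by ring

lemma fact_split (p q : ℕ) :
    ((Nat.factorial (3*q+p) : ℕ) : ℝ) ^ ((1:ℝ)/3)
      ≤ 2^(p+3*q) * 3^q * (Nat.factorial p : ℝ) ^ ((1:ℝ)/3) * (Nat.factorial q : ℝ) := by
  have hnat : Nat.factorial (3*q+p) ≤ 2^(p+3*q) * (Nat.factorial p * (27^q * (Nat.factorial q)^3)) := by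
    calc Nat.factorial (3*q+p) ≤ 2^(3*q+p) * (Nat.factorial p * Nat.factorial (3*q)) :=
          fact_add_le p (3*q)
      _ ≤ 2^(3*q+p) * (Nat.factorial p * (27^q * (Nat.factorial q)^3)) :=
          Nat.mul_le_mul_left _ (Nat.mul_le_mul_left _ (fact_three_mul q))
      _ = 2^(p+3*q) * (Nat.factorial p * (27^q * (Nat.factorial q)^3)) := by
          rw [Nat.add_comm (3*q) p]
  have hr : ((Nat.factorial (3*q+p) : ℕ) : ℝ) ^ ((1:ℝ)/3)
      ≤ (((2:ℝ)^(p+3*q) * ((Nat.factorial p : ℝ) * (27^q * (Nat.factorial q : ℝ)^3)))) ^ ((1:ℝ)/3) := by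
    apply Real.rpow_le_rpow (by positivity) _ (by norm_num)
    exact_mod_cast hnat
  refine hr.trans ?_
  rw [Real.mul_rpow (by positivity) (by positivity),
    Real.mul_rpow (by positivity) (by positivity),
    Real.mul_rpow (by positivity) (by positivity)]
  have e27 : ((27:ℝ)^q) ^ ((1:ℝ)/3) = 3^q := by
    rw [show (27:ℝ)^q = (3:ℝ)^(3*q) by rw [pow_mul]; norm_num,
      ← Real.rpow_natCast 3 (3*q), ← Real.rpow_mul (by norm_num)]
    rw [show ((3*q : ℕ) : ℝ) * ((1:ℝ)/3) = (q : ℕ) by push_cast; ring]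
    exact Real.rpow_natCast 3 q
  have eq3 : ((Nat.factorial q : ℝ)^3) ^ ((1:ℝ)/3) = (Nat.factorial q : ℝ) := by
    rw [← Real.rpow_natCast (Nat.factorial q : ℝ) 3, ← Real.rpow_mul (by positivity)]
    norm_num
  have e2 : ((2:ℝ)^(p+3*q)) ^ ((1:ℝ)/3) ≤ (2:ℝ)^(p+3*q) := by
    nth_rewrite 2 [show ((2:ℝ)^(p+3*q)) = ((2:ℝ)^(p+3*q)) ^ (1:ℝ) from (Real.rpow_one _).symm]
    exact Real.rpow_le_rpow_of_exponent_le (one_le_pow₀ (by norm_num)) (by norm_num)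
  rw [e27, eq3]
  calc ((2:ℝ)^(p+3*q)) ^ ((1:ℝ)/3) * ((Nat.factorial p : ℝ) ^ ((1:ℝ)/3) * ((3:ℝ)^q * (Nat.factorial q : ℝ)))
      ≤ (2:ℝ)^(p+3*q) * ((Nat.factorial p : ℝ) ^ ((1:ℝ)/3) * ((3:ℝ)^q * (Nat.factorial q : ℝ))) := by
        apply mul_le_mul_of_nonneg_right e2 (by positivity)
    _ = 2^(p+3*q) * 3^q * (Nat.factorial p : ℝ) ^ ((1:ℝ)/3) * (Nat.factorial q : ℝ) := by ring

/-- let `y₀ ∈ L²(ℝ)` be supported in `[-L,L]`, and let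
`y(x,t) = (3t)^{-1/3} ∫_{-L}^{L} Ai((x-s)/(3t)^{1/3}) y₀(s) ds` be the solution of
`∂ₜy + ∂ₓ³y = 0` with `y(·,0) = y₀`. Then for all `l > 0` and `0 < ε < T`, `y` is
Gevrey of order `1/3` in `x` and `1` in `t` on `[-l,l]×[ε,T]`: there exist
`K', R₁, R₂ > 0` with
`|∂ₓᵖ∂ₜ^q y(x,t)| ≤ (K'/(R₁ᵖ R₂^q)) (p!)^{1/3} q! ‖y₀‖_{L¹(-L,L)}`. -/
theorem stmt19 (Ai : ℝ → ℝ) (hAi : ContDiff ℝ (⊤ : ℕ∞) Ai)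
    (hode : ∀ x : ℝ, iteratedDeriv 2 Ai x = x * Ai x)
    (hAi0 : Ai 0 = 1 / ((3 : ℝ) ^ ((2 : ℝ) / 3) * Real.Gamma (2 / 3)))
    (hAi0' : deriv Ai 0 = -(1 / ((3 : ℝ) ^ ((1 : ℝ) / 3) * Real.Gamma (1 / 3))))
    (L : ℝ) (hL : 0 < L) (y₀ : ℝ → ℝ) (hy₀ : MemLp y₀ 2 volume)
    (hsupp : ∀ᵐ x : ℝ, x ∉ Set.Icc (-L) L → y₀ x = 0)
    (y : ℝ → ℝ → ℝ)
    (hy : ∀ x : ℝ, ∀ t : ℝ, 0 < t →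
      y x t = (3 * t) ^ (-(1 : ℝ) / 3) *
        ∫ s in (-L)..L, Ai ((x - s) / (3 * t) ^ ((1 : ℝ) / 3)) * y₀ s) :
    ∀ l : ℝ, 0 < l → ∀ ε T : ℝ, 0 < ε → ε < T →
      ∃ K' R₁ R₂ : ℝ, 0 < K' ∧ 0 < R₁ ∧ 0 < R₂ ∧
        ∀ p q : ℕ, ∀ x ∈ Set.Icc (-l) l, ∀ t ∈ Set.Icc ε T,
          |iteratedDeriv p (fun x' => iteratedDeriv q (fun t' => y x' t') t) x| ≤
            K' / (R₁ ^ p * R₂ ^ q) * (Nat.factorial p : ℝ) ^ ((1 : ℝ) / 3) *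
              (Nat.factorial q : ℝ) * ∫ s in (-L)..L, |y₀ s| := by
  intro l hl ε T hε hεT
  have hy₀m : AEStronglyMeasurable y₀ volume := hy₀.aestronglyMeasurable
  -- interval integrability of y₀
  have hy₀int : IntervalIntegrable y₀ volume (-L) L := by
    rw [intervalIntegrable_iff]
    haveI : IsFiniteMeasure (volume.restrict (Set.uIoc (-L) L)) := by
      constructor
      rw [Measure.restrict_apply_univ, Set.uIoc, Real.volume_Ioc]
      exact ENNReal.ofReal_lt_top
    have h2 : MemLp y₀ 2 (volume.restrict (Set.uIoc (-L) L)) := hy₀.restrict _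
    exact memLp_one_iff_integrable.mp (h2.mono_exponent (by norm_num))
  have hLL : (-L) ≤ L := by linarith
  -- y equals the m = 0 kernel integral
  have hu0 : ∀ x t : ℝ, 0 < t →
      y x t = ∫ s in (-L)..L, airyE Ai 0 (x - s) t * y₀ s := by
    intro x t ht
    have hP : (0:ℝ) < 3 * t := by linarith
    rw [hy x t ht, ← intervalIntegral.integral_const_mul]
    congr 1
    funext s
    rw [airyE, iteratedDeriv_zero]
    have harg : (x - s) / (3*t) ^ ((1:ℝ)/3) = (x - s) * (3*t) ^ (-(1:ℝ)/3) := by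
      rw [div_eq_mul_inv]
      congr 1
      rw [show (-(1:ℝ)/3) = -((1:ℝ)/3) from by ring, Real.rpow_neg hP.le]
    have epre : -(((0:ℕ):ℝ)+1)/3 = -(1:ℝ)/3 := by norm_num
    rw [harg, epre]
    ring
  -- iterated t-derivatives
  have ht_iter : ∀ q : ℕ, ∀ x t : ℝ, 0 < t →
      iteratedDeriv q (fun t' => y x t') t
        = (-1:ℝ)^q * ∫ s in (-L)..L, airyE Ai (3*q) (x - s) t * y₀ s := by
    intro q
    induction q with
    | zero =>
      intro x t ht
      simpa using hu0 x t ht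
    | succ q ih =>
      intro x t ht
      rw [iteratedDeriv_succ]
      have hnb : iteratedDeriv q (fun t' => y x t')
          =ᶠ[nhds t] (fun t' => (-1:ℝ)^q * ∫ s in (-L)..L, airyE Ai (3*q) (x - s) t' * y₀ s) :=
        Filter.eventuallyEq_of_mem (isOpen_Ioi.mem_nhds ht) (fun t' ht' => ih x t' ht')
      rw [hnb.deriv_eq]
      have hd := (u_hasDerivAt_t Ai hAi hode L y₀ hy₀m hy₀int (3*q) x t ht).const_mul ((-1:ℝ)^q)
      rw [hd.deriv, show 3*(q+1) = 3*q+3 from by ring]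
      ring
  -- iterated x-derivatives
  have hx_iter : ∀ p q : ℕ, ∀ x t : ℝ, 0 < t →
      iteratedDeriv p (fun x' => iteratedDeriv q (fun t' => y x' t') t) x
        = (-1:ℝ)^q * ∫ s in (-L)..L, airyE Ai (3*q + p) (x - s) t * y₀ s := by
    intro p q
    induction p with
    | zero =>
      intro x t ht
      simpa using ht_iter q x t ht
    | succ p ih =>
      intro x t ht
      rw [iteratedDeriv_succ]
      have hfun : iteratedDeriv p (fun x' => iteratedDeriv q (fun t' => y x' t') t)
          = fun x' => (-1:ℝ)^q * ∫ s in (-L)..L, airyE Ai (3*q + p) (x' - s) t * y₀ s :=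
        funext fun x' => ih x' t ht
      rw [hfun,
        ((u_hasDerivAt_x Ai hAi hode L y₀ hy₀m hy₀int (3*q+p) x t ht).const_mul ((-1:ℝ)^q)).deriv]
      rfl
  -- Gevrey constants on the relevant compact window
  have hε3 : (0:ℝ) < 3 * ε := by linarith
  obtain ⟨C, M, hC, hM, hCM⟩ :=
    airy_gevrey Ai hAi hode ((l + |L|) * (3*ε) ^ (-(1:ℝ)/3))
  set D : ℝ := max ((3*ε) ^ (-(1:ℝ)/3)) 1 with hDdef
  have hD1 : (1:ℝ) ≤ D := le_max_right _ _
  have hD0 : (0:ℝ) < D := by linarith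
  -- bound on kernel integrals
  have hubound : ∀ m : ℕ, ∀ x ∈ Set.Icc (-l) l, ∀ t ∈ Set.Icc ε T,
      |∫ s in (-L)..L, airyE Ai m (x - s) t * y₀ s|
        ≤ D^(m+1) * (C * M^m * (Nat.factorial m : ℝ) ^ ((1:ℝ)/3))
            * ∫ s in (-L)..L, |y₀ s| := by
    intro m x hx t htT
    have ht : 0 < t := lt_of_lt_of_le hε htT.1
    have hP : (0:ℝ) < 3 * t := by linarith
    set K : ℝ := D^(m+1) * (C * M^m * (Nat.factorial m : ℝ) ^ ((1:ℝ)/3)) with hKdef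
    have hK0 : 0 ≤ K := by positivity
    have hpt : ∀ s ∈ Set.Icc (-L) L,
        |airyE Ai m (x - s) t * y₀ s| ≤ K * |y₀ s| := by
      intro s hs
      have hsL : |s| ≤ |L| := by
        rcases abs_cases L with ⟨e1, e2⟩ | ⟨e1, e2⟩ <;>
          (rw [abs_le]; constructor <;> [linarith [hs.1]; linarith [hs.2]])
      have hxl : |x| ≤ l := abs_le.mpr ⟨hx.1, hx.2⟩
      have h3t : (3*t) ^ (-(1:ℝ)/3) ≤ (3*ε) ^ (-(1:ℝ)/3) :=
        Real.rpow_le_rpow_of_nonpos hε3 (by linarith [htT.1]) (by norm_num)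
      have hz : |(x - s) * (3 * t) ^ (-(1:ℝ)/3)| ≤ (l + |L|) * (3*ε) ^ (-(1:ℝ)/3) := by
        rw [abs_mul, abs_of_nonneg (Real.rpow_nonneg hP.le _)]
        have h1 : |x - s| ≤ l + |L| := (abs_sub _ _).trans (by linarith)
        exact mul_le_mul h1 h3t (Real.rpow_nonneg hP.le _) (by positivity)
      have hb := hCM m _ hz
      have h1 := abs_airyE_le Ai m (x - s) t _ ht hb
      have hpre : (3*t) ^ (-((m:ℝ)+1)/3) ≤ D^(m+1) := by
        have e1 : (3*t) ^ (-((m:ℝ)+1)/3) = ((3*t) ^ (-(1:ℝ)/3)) ^ (m+1) := by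
          rw [← Real.rpow_natCast ((3*t) ^ (-(1:ℝ)/3)) (m+1), ← Real.rpow_mul hP.le]
          congr 1
          push_cast
          ring
        rw [e1]
        exact pow_le_pow_left₀ (Real.rpow_nonneg hP.le _)
          (le_trans h3t (le_max_left _ _)) (m+1)
      rw [abs_mul]
      calc |airyE Ai m (x - s) t| * |y₀ s|
          ≤ ((3*t) ^ (-((m:ℝ)+1)/3) * (C * M^m * (Nat.factorial m : ℝ) ^ ((1:ℝ)/3))) * |y₀ s| :=
            mul_le_mul_of_nonneg_right h1 (abs_nonneg _)
        _ ≤ K * |y₀ s| := by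
            apply mul_le_mul_of_nonneg_right _ (abs_nonneg _)
            rw [hKdef]
            exact mul_le_mul_of_nonneg_right hpre (by positivity)
    calc |∫ s in (-L)..L, airyE Ai m (x - s) t * y₀ s|
        ≤ ∫ s in (-L)..L, |airyE Ai m (x - s) t * y₀ s| := by
          have := intervalIntegral.norm_integral_le_integral_norm
            (f := fun s => airyE Ai m (x - s) t * y₀ s) (μ := volume) hLL
          simpa [Real.norm_eq_abs, ← abs_mul] using this
      _ ≤ ∫ s in (-L)..L, K * |y₀ s| := by
          apply intervalIntegral.integral_mono_on hLL
            ((u_int Ai hAi L y₀ hy₀int m x t ht).abs) ((hy₀int.abs).const_mul K)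
          exact hpt
      _ = K * ∫ s in (-L)..L, |y₀ s| := intervalIntegral.integral_const_mul _ _
  -- choose the constants
  refine ⟨C * D, (2*D*M)⁻¹, (24*D^3*M^3)⁻¹, by positivity, by positivity, by positivity, ?_⟩
  intro p q x hx t htT
  have ht : 0 < t := lt_of_lt_of_le hε htT.1
  rw [hx_iter p q x t ht, abs_mul, abs_pow, abs_neg, abs_one, one_pow, one_mul]
  have hJ : (0:ℝ) ≤ ∫ s in (-L)..L, |y₀ s| :=
    intervalIntegral.integral_nonneg hLL (fun s _ => abs_nonneg _)
  have h24 : (24:ℝ)^q = 2^(3*q) * 3^q := by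
    rw [pow_mul, ← mul_pow]
    norm_num
  calc |∫ s in (-L)..L, airyE Ai (3*q+p) (x - s) t * y₀ s|
      ≤ D^(3*q+p+1) * (C * M^(3*q+p) * (Nat.factorial (3*q+p) : ℝ) ^ ((1:ℝ)/3))
          * ∫ s in (-L)..L, |y₀ s| := hubound (3*q+p) x hx t htT
    _ ≤ D^(3*q+p+1) * (C * M^(3*q+p)
          * (2^(p+3*q) * 3^q * (Nat.factorial p : ℝ) ^ ((1:ℝ)/3) * (Nat.factorial q : ℝ)))
          * ∫ s in (-L)..L, |y₀ s| := by
        apply mul_le_mul_of_nonneg_right _ hJ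
        apply mul_le_mul_of_nonneg_left _ (by positivity)
        exact mul_le_mul_of_nonneg_left (fact_split p q) (by positivity)
    _ = C * D / ((2*D*M)⁻¹ ^ p * (24*D^3*M^3)⁻¹ ^ q) * (Nat.factorial p : ℝ) ^ ((1:ℝ)/3)
          * (Nat.factorial q : ℝ) * ∫ s in (-L)..L, |y₀ s| := by
        have hc : (C * D) / ((2*D*M)⁻¹ ^ p * (24*D^3*M^3)⁻¹ ^ q)
            = (C*D) * ((2*D*M)^p * (24*D^3*M^3)^q) := by
          rw [inv_pow, inv_pow, ← mul_inv, div_eq_mul_inv, inv_inv]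
        rw [hc, mul_pow (2*D) M, mul_pow (24*D^3) (M^3), mul_pow 2 D, mul_pow 24 (D^3), h24]
        ring
end
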